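/- arXiv:2505.10763 — 6 statements merged into one kernel-verified Lean document; each statement's English description precedes it below -/
import Mathlib

section
/- The number of parking functions of size n is (n+1)^(n-1). -/
open Finset List

-- for a sorted list, l.getD i 0 ≤ r ↔ i+1 ≤ countP (· ≤ r) l
lemma sorted_getD_le_iff (l : List ℕ) (hl : l.Pairwise (· ≤ ·)) (i : ℕ) (hi : i < l.length)
    (r : ℕ) : l.getD i 0 ≤ r ↔ i + 1 ≤ l.countP (· ≤ r) := by
  have hsplit : l.countP (fun x => x ≤ r) =
      (l.take (i+1)).countP (fun x => x ≤ r) + (l.drop (i+1)).countP (fun x => x ≤ r) := by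
    rw [← List.countP_append, List.take_append_drop]
  constructor
  · intro h
    have : (l.take (i+1)).countP (fun x => x ≤ r) = i + 1 := by
      rw [List.countP_eq_length.2, List.length_take]
      · omega
      · intro a ha
        have := List.mem_take_iff_getElem.1 ha
        obtain ⟨j, hj, rfl⟩ := this
        have hji : j < i + 1 := by omega
        have hle : l[j] ≤ l[i] := by
          rcases Nat.lt_or_ge j i with h' | h'
          · exact (List.pairwise_iff_get.1 hl) ⟨j, by omega⟩ ⟨i, hi⟩ h'
          · have : j = i := by omega
            subst this; exact le_refl _
        simp only [decide_eq_true_eq]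
        calc l[j] ≤ l[i] := hle
          _ = l.getD i 0 := by rw [List.getD_eq_getElem]
          _ ≤ r := h
    omega
  · intro h
    by_contra hgt
    push_neg at hgt
    have hi' : l.getD i 0 = l[i] := List.getD_eq_getElem l 0 hi
    -- all elements of drop i are > r
    have hdrop : (l.drop i).countP (fun x => x ≤ r) = 0 := by
      rw [List.countP_eq_zero]
      intro a ha
      obtain ⟨j, hj, rfl⟩ := List.mem_iff_getElem.1 ha
      have hij : i + j < l.length := by
        have := (List.length_drop (i := i) (l := l)) ▸ hj
        omega
      rw [List.getElem_drop]
      have : l[i] ≤ l[i + j] := by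
        rcases Nat.eq_or_lt_of_le (Nat.le_add_right i j) with h' | h'
        · simp [← h']
        · exact (List.pairwise_iff_get.1 hl) ⟨i, hi⟩ ⟨i + j, hij⟩ h'
      simp only [decide_eq_true_eq]
      omega
    have hsplit' : l.countP (fun x => x ≤ r) =
        (l.take i).countP (fun x => x ≤ r) + (l.drop i).countP (fun x => x ≤ r) := by
      rw [← List.countP_append, List.take_append_drop]
    have : (l.take i).countP (fun x => x ≤ r) ≤ i := by
      calc (l.take i).countP (fun x => x ≤ r) ≤ (l.take i).length := List.countP_le_length
        _ ≤ i := by simp [List.length_take]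
    omega

/-- The weakly increasing rearrangement of the entries of `p`. -/
def sortedOf {n : ℕ} (p : Fin n → ℕ) : List ℕ :=
  Multiset.sort (Multiset.ofList (List.ofFn p)) (· ≤ ·)

/-- A parking function of size `n` is a tuple of `n` positive integers such
that, after sorting weakly increasingly, the `i`-th smallest entry is at most `i`. -/
def IsParkingFunction {n : ℕ} (p : Fin n → ℕ) : Prop :=
  (∀ i, 0 < p i) ∧ ∀ i ∈ Finset.range n, (sortedOf p).getD i 0 ≤ i + 1

lemma countP_sortedOf {n : ℕ} (p : Fin n → ℕ) (r : ℕ) :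
    (sortedOf p).countP (fun x => x ≤ r) = (univ.filter (fun i => p i ≤ r)).card := by
  have hperm : (sortedOf p).Perm (List.ofFn p) := by
    rw [← Multiset.coe_eq_coe, sortedOf, Multiset.sort_eq]
  rw [hperm.countP_eq, List.ofFn_eq_map, List.countP_map]
  rw [List.countP_eq_length_filter, Fin.univ_def]
  simp [Finset.filter, Finset.card]
  rfl

lemma length_sortedOf {n : ℕ} (p : Fin n → ℕ) : (sortedOf p).length = n := by
  have hperm : (sortedOf p).Perm (List.ofFn p) := by
    rw [← Multiset.coe_eq_coe, sortedOf, Multiset.sort_eq]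
  simp [hperm.length_eq]

lemma isParkingFunction_iff {n : ℕ} (p : Fin n → ℕ) :
    IsParkingFunction p ↔ ((∀ i, 0 < p i) ∧
      ∀ r ∈ Finset.Icc 1 n, r ≤ (univ.filter (fun i => p i ≤ r)).card) := by
  have hs : (sortedOf p).Pairwise (· ≤ ·) := Multiset.pairwise_sort _ _
  constructor
  · rintro ⟨h1, h2⟩
    refine ⟨h1, fun r hr => ?_⟩
    rw [Finset.mem_Icc] at hr
    have := h2 (r - 1) (Finset.mem_range.2 (by omega))
    have hr1 : r - 1 + 1 = r := by omega
    rw [hr1] at this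
    have key := (sorted_getD_le_iff _ hs (r-1) (by rw [length_sortedOf]; omega) r).1 this
    rw [countP_sortedOf] at key
    omega
  · rintro ⟨h1, h2⟩
    refine ⟨h1, fun i hi => ?_⟩
    rw [Finset.mem_range] at hi
    have := h2 (i+1) (Finset.mem_Icc.2 (by omega))
    rw [← countP_sortedOf] at this
    exact (sorted_getD_le_iff _ hs i (by rw [length_sortedOf]; omega) (i+1)).2 this

variable {n : ℕ}

def cnt {n : ℕ} (f : Fin n → ZMod (n+1)) (x : ZMod (n+1)) : ℕ :=
  #(univ.filter (fun i => f i = x))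

def Good {n : ℕ} (f : Fin n → ZMod (n+1)) (s : ZMod (n+1)) : Prop :=
  ∀ k ∈ Finset.Icc 1 (n+1), (∑ j ∈ Finset.range k, cnt f (s - (j : ℕ))) < k

lemma cnt_shift (f : Fin n → ZMod (n+1)) (c x : ZMod (n+1)) :
    cnt (fun i => f i + c) x = cnt f (x - c) := by
  unfold cnt
  congr 1
  apply Finset.filter_congr
  intro i _
  constructor
  · intro h; simp only at h; rw [← h]; ring
  · intro h; simp only at h ⊢; rw [h]; ring

lemma good_shift (f : Fin n → ZMod (n+1)) (c s : ZMod (n+1)) :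
    Good (fun i => f i + c) (s + c) ↔ Good f s := by
  unfold Good
  apply forall₂_congr
  intro k hk
  have : ∀ j : ℕ, cnt (fun i => f i + c) (s + c - (j:ℕ)) = cnt f (s - (j:ℕ)) := by
    intro j; rw [cnt_shift]; ring_nf
  rw [Finset.sum_congr rfl (fun j _ => this j)]

lemma sum_cnt_range (f : Fin n → ZMod (n+1)) :
    ∑ j ∈ Finset.range (n+1), cnt f (j : ℕ) = n := by
  have h1 : ∑ x : ZMod (n+1), cnt f x = n := by
    unfold cnt
    rw [← Finset.card_eq_sum_card_fiberwise (f := f) (t := univ) (fun i _ => mem_univ _)]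
    simp
  have h2 : ∑ j ∈ Finset.range (n+1), cnt f (j : ℕ) = ∑ x : ZMod (n+1), cnt f x := by
    apply Finset.sum_nbij' (i := fun j => ((j : ℕ) : ZMod (n+1))) (j := fun x => x.val)
    · intro j _; exact mem_univ _
    · intro x _; exact Finset.mem_range.2 (ZMod.val_lt x)
    · intro j hj; rw [ZMod.val_natCast_of_lt (Finset.mem_range.1 hj)]
    · intro x _; simp [ZMod.natCast_val, ZMod.cast_id]
    · intro j _; rfl
  rw [h2, h1]

def Sm {n : ℕ} (f : Fin n → ZMod (n+1)) (t : ℕ) : ℕ := ∑ j ∈ Finset.range t, cnt f (j : ℕ)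

def Dm {n : ℕ} (f : Fin n → ZMod (n+1)) (t : ℕ) : ℤ := (t : ℤ) - (Sm f t : ℤ)

lemma Sm_succ (f : Fin n → ZMod (n+1)) (t : ℕ) : Sm f (t+1) = Sm f t + cnt f (t : ℕ) :=
  Finset.sum_range_succ _ _

lemma Sm_mono (f : Fin n → ZMod (n+1)) : Monotone (Sm f) := fun a b hab =>
  Finset.sum_le_sum_of_subset (Finset.range_subset_range.2 hab)

lemma cnt_period (f : Fin n → ZMod (n+1)) (j : ℕ) :
    cnt f ((j + (n+1) : ℕ) : ZMod (n+1)) = cnt f (j : ℕ) := by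
  congr 1
  push_cast
  simp

lemma Sm_period (f : Fin n → ZMod (n+1)) (t : ℕ) : Sm f (t + (n+1)) = Sm f t + n := by
  induction t with
  | zero => simpa [Sm] using sum_cnt_range f
  | succ t ih =>
      have : t + 1 + (n+1) = (t + (n+1)) + 1 := by ring
      rw [this, Sm_succ, ih, cnt_period, Sm_succ]
      ring

lemma Dm_period (f : Fin n → ZMod (n+1)) (t : ℕ) : Dm f (t + (n+1)) = Dm f t + 1 := by
  unfold Dm
  rw [Sm_period]
  push_cast
  ring

lemma key_sum (f : Fin n → ZMod (n+1)) (u k : ℕ) (hk : k ≤ u) :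
    ∑ j ∈ Finset.range k, cnt f ((u - 1 - j : ℕ) : ZMod (n+1)) = Sm f u - Sm f (u - k) := by
  induction k with
  | zero => simp
  | succ k ih =>
      rw [Finset.sum_range_succ, ih (by omega)]
      have h1 : u - k = (u - (k+1)) + 1 := by omega
      have h2 : Sm f (u - k) = Sm f (u - (k+1)) + cnt f ((u - (k+1) : ℕ)) := by
        rw [h1, Sm_succ]
      have h3 : u - 1 - k = u - (k+1) := by omega
      rw [h3]
      have m1 : Sm f (u - (k+1)) ≤ Sm f (u - k) := Sm_mono f (by omega)
      have m2 : Sm f (u - k) ≤ Sm f u := Sm_mono f (by omega)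
      omega

lemma good_iff_record (f : Fin n → ZMod (n+1)) (u : ℕ) (hu : n + 1 ≤ u) :
    Good f ((u - 1 : ℕ) : ZMod (n+1)) ↔
      ∀ k ∈ Finset.Icc 1 (n+1), Dm f (u - k) < Dm f u := by
  unfold Good
  apply forall₂_congr
  intro k hk
  rw [Finset.mem_Icc] at hk
  have hterm : ∀ j ∈ Finset.range k,
      cnt f (((u - 1 : ℕ) : ZMod (n+1)) - (j : ℕ)) = cnt f ((u - 1 - j : ℕ) : ZMod (n+1)) := by
    intro j hj
    rw [Finset.mem_range] at hj
    congr 1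
    have e1 : ((u - 1 - j : ℕ) : ZMod (n+1)) = ((u-1 : ℕ) : ZMod (n+1)) - (j : ℕ) :=
      Nat.cast_sub (by omega)
    rw [e1]
  rw [Finset.sum_congr rfl hterm, key_sum f u k (by omega)]
  have m2 : Sm f (u - k) ≤ Sm f u := Sm_mono f (by omega)
  unfold Dm
  constructor <;> intro h
  · have : (Sm f u - Sm f (u-k) : ℕ) < k := h
    push_cast [Nat.cast_sub (by omega : k ≤ u)]
    omega
  · push_cast [Nat.cast_sub (by omega : k ≤ u)] at h
    omega

lemma record_asymm (f : Fin n → ZMod (n+1)) (u₁ u₂ : ℕ)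
    (h1 : n + 2 ≤ u₁) (h2 : u₂ ≤ 2 * n + 2) (hlt : u₁ < u₂)
    (R1 : ∀ k ∈ Finset.Icc 1 (n+1), Dm f (u₁ - k) < Dm f u₁)
    (R2 : ∀ k ∈ Finset.Icc 1 (n+1), Dm f (u₂ - k) < Dm f u₂) : False := by
  have hk1 : u₂ - u₁ ∈ Finset.Icc 1 (n+1) := Finset.mem_Icc.2 (by omega)
  have hA : Dm f u₁ < Dm f u₂ := by
    have := R2 _ hk1
    rwa [show u₂ - (u₂ - u₁) = u₁ by omega] at this
  have hk2 : u₁ + (n+1) - u₂ ∈ Finset.Icc 1 (n+1) := Finset.mem_Icc.2 (by omega)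
  have hB : Dm f (u₂ - (n+1)) < Dm f u₁ := by
    have := R1 _ hk2
    rwa [show u₁ - (u₁ + (n+1) - u₂) = u₂ - (n+1) by omega] at this
  have hper : Dm f u₂ = Dm f (u₂ - (n+1)) + 1 := by
    have := Dm_period f (u₂ - (n+1))
    rwa [show u₂ - (n+1) + (n+1) = u₂ by omega] at this
  omega

lemma existsUnique_good (f : Fin n → ZMod (n+1)) : ∃! s : ZMod (n+1), Good f s := by
  -- existence
  have hex : ∃ s, Good f s := by
    set T := Finset.Icc (n+2) (2*n+2) with hT
    have hTne : T.Nonempty := ⟨n+2, Finset.mem_Icc.2 (by omega)⟩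
    obtain ⟨u0, hu0T, hu0max⟩ := T.exists_max_image (Dm f) hTne
    set T' := T.filter (fun u => ∀ v ∈ T, Dm f v ≤ Dm f u) with hT'
    have hT'ne : T'.Nonempty := ⟨u0, Finset.mem_filter.2 ⟨hu0T, hu0max⟩⟩
    obtain ⟨u, huT', hmin⟩ := T'.exists_min_image id hT'ne
    rw [Finset.mem_filter] at huT'
    obtain ⟨huT, humax⟩ := huT'
    rw [hT, Finset.mem_Icc] at huT
    refine ⟨((u - 1 : ℕ) : ZMod (n+1)), (good_iff_record f u (by omega)).2 ?_⟩
    intro k hk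
    rw [Finset.mem_Icc] at hk
    set t := u - k with ht
    rcases Nat.lt_or_ge (n+1) t with h' | h'
    · have htT : t ∈ T := Finset.mem_Icc.2 (by omega)
      have hle : Dm f t ≤ Dm f u := humax t htT
      rcases lt_or_eq_of_le hle with h'' | h''
      · exact h''
      · exfalso
        have htT' : t ∈ T' := Finset.mem_filter.2 ⟨htT, by
          intro v hv; rw [h'']; exact humax v hv⟩
        have := hmin t htT'
        simp only [id] at this
        omega
    · have ht1 : 1 ≤ t := by omega
      have htmT : t + (n+1) ∈ T := Finset.mem_Icc.2 (by omega)
      have hmax := humax (t + (n+1)) htmT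
      have hper := Dm_period f t
      omega
  obtain ⟨s, hs⟩ := hex
  refine ⟨s, hs, ?_⟩
  intro s' hs'
  by_contra hne
  have repr : ∀ x : ZMod (n+1), ((x.val + (n+1) : ℕ) : ZMod (n+1)) = x := by
    intro x
    push_cast
    simp [ZMod.natCast_val, ZMod.cast_id, ZMod.natCast_self]
  set u₁ := s'.val + (n+1) + 1 with hu1
  set u₂ := s.val + (n+1) + 1 with hu2
  have e1 : ((u₁ - 1 : ℕ) : ZMod (n+1)) = s' := by
    rw [show u₁ - 1 = s'.val + (n+1) by omega]; exact repr s'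
  have e2 : ((u₂ - 1 : ℕ) : ZMod (n+1)) = s := by
    rw [show u₂ - 1 = s.val + (n+1) by omega]; exact repr s
  have hR1 : ∀ k ∈ Finset.Icc 1 (n+1), Dm f (u₁ - k) < Dm f u₁ :=
    (good_iff_record f u₁ (by omega)).1 (by rw [e1]; exact hs')
  have hR2 : ∀ k ∈ Finset.Icc 1 (n+1), Dm f (u₂ - k) < Dm f u₂ :=
    (good_iff_record f u₂ (by omega)).1 (by rw [e2]; exact hs)
  have hvalne : s'.val ≠ s.val := fun h => hne (by
    have h' : ((s'.val : ℕ) : ZMod (n+1)) = ((s.val : ℕ) : ZMod (n+1)) := by rw [h]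
    simpa [ZMod.natCast_val, ZMod.cast_id] using h')
  have hv1 : s'.val < n+1 := ZMod.val_lt s'
  have hv2 : s.val < n+1 := ZMod.val_lt s
  rcases Nat.lt_or_ge u₁ u₂ with h | h
  · exact record_asymm f u₁ u₂ (by omega) (by omega) h hR1 hR2
  · exact record_asymm f u₂ u₁ (by omega) (by omega) (by omega) hR2 hR1

lemma cnt_eq_card_val (f : Fin n → ZMod (n+1)) (v : ℕ) (hv : v ≤ n) :
    cnt f ((v : ℕ) : ZMod (n+1)) = #(univ.filter (fun i => (f i).val = v)) := by
  unfold cnt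
  congr 1
  apply Finset.filter_congr
  intro i _
  constructor
  · intro h; rw [h, ZMod.val_cast_of_lt (by omega)]
  · intro h
    apply ZMod.val_injective
    rw [h, ZMod.val_cast_of_lt (by omega)]

lemma neg_one_sub_cast (j : ℕ) (hj : j ≤ n) :
    (-1 : ZMod (n+1)) - (j : ℕ) = ((n - j : ℕ) : ZMod (n+1)) := by
  have : ((n - j : ℕ) : ZMod (n+1)) + ((j + 1 : ℕ) : ZMod (n+1)) = ((n + 1 : ℕ) : ZMod (n+1)) := by
    rw [← Nat.cast_add]
    congr 1
    omega
  rw [ZMod.natCast_self] at this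
  have h2 : ((n - j : ℕ) : ZMod (n+1)) = -(((j : ℕ) : ZMod (n+1)) + 1) :=
    eq_neg_of_add_eq_zero_left (by rw [← this]; push_cast; ring)
  rw [h2]
  ring

lemma sum_cnt_tail (f : Fin n → ZMod (n+1)) (k : ℕ) (hk : k ≤ n + 1) :
    ∑ j ∈ Finset.range k, cnt f ((-1 : ZMod (n+1)) - (j : ℕ))
      = #(univ.filter (fun i => n + 1 - k ≤ (f i).val)) := by
  induction k with
  | zero =>
      simp only [Finset.range_zero, Finset.sum_empty]
      symm
      rw [Finset.card_eq_zero, Finset.filter_eq_empty_iff]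
      intro i _
      have := ZMod.val_lt (f i)
      omega
  | succ k ih =>
      rw [Finset.sum_range_succ, ih (by omega)]
      have hck : cnt f ((-1 : ZMod (n+1)) - (k : ℕ))
          = #(univ.filter (fun i => (f i).val = n - k)) := by
        rw [neg_one_sub_cast k (by omega), cnt_eq_card_val f (n-k) (by omega)]
      rw [hck]
      have hsplit : univ.filter (fun i => n + 1 - (k+1) ≤ (f i).val)
          = univ.filter (fun i => n + 1 - k ≤ (f i).val)
            ∪ univ.filter (fun i => (f i).val = n - k) := by
        rw [← Finset.filter_or]
        apply Finset.filter_congr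
        intro i _
        omega
      rw [hsplit, Finset.card_union_of_disjoint]
      rw [Finset.disjoint_filter]
      intro i _ h1 h2
      omega

lemma good_neg_one_iff (f : Fin n → ZMod (n+1)) :
    Good f (-1 : ZMod (n+1)) ↔
      ∀ r ∈ Finset.Icc 1 n, r ≤ #(univ.filter (fun i => (f i).val < r)) := by
  have hcompl : ∀ r : ℕ, #(univ.filter (fun i => r ≤ (f i).val))
      + #(univ.filter (fun i => (f i).val < r)) = n := by
    intro r
    have := Finset.card_filter_add_card_filter_not
      (s := (univ : Finset (Fin n))) (p := fun i => r ≤ (f i).val)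
    simp only [not_le, Finset.card_univ, Fintype.card_fin] at this
    simpa using this
  constructor
  · intro hg r hr
    rw [Finset.mem_Icc] at hr
    have hk : n + 1 - r ∈ Finset.Icc 1 (n+1) := Finset.mem_Icc.2 (by omega)
    have := hg _ hk
    rw [sum_cnt_tail f _ (by omega)] at this
    have hc := hcompl (n + 1 - (n + 1 - r))
    have he : n + 1 - (n + 1 - r) = r := by omega
    rw [he] at hc this
    omega
  · intro h k hk
    rw [Finset.mem_Icc] at hk
    rw [sum_cnt_tail f k hk.2]
    rcases Nat.lt_or_ge k (n+1) with h' | h'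
    · have hr : n + 1 - k ∈ Finset.Icc 1 n := Finset.mem_Icc.2 (by omega)
      have := h _ hr
      have hc := hcompl (n + 1 - k)
      omega
    · have hc := hcompl (n + 1 - k)
      have : #(univ.filter (fun i => n + 1 - k ≤ (f i).val)) ≤ n := by
        calc _ ≤ #(univ : Finset (Fin n)) := Finset.card_filter_le _ _
          _ = n := by simp
      omega

lemma card_good_mul (s₀ : ZMod (n+1)) :
    Nat.card {f : Fin n → ZMod (n+1) // Good f s₀} * (n+1) = (n+1)^n := by
  classical
  have hbij : Function.Bijective
      (fun q : {f : Fin n → ZMod (n+1) // Good f s₀} × ZMod (n+1) =>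
        (fun i => q.1.1 i + q.2 : Fin n → ZMod (n+1))) := by
    constructor
    · rintro ⟨⟨f, hf⟩, c⟩ ⟨⟨f', hf'⟩, c'⟩ h
      simp only at h
      set d := c - c' with hd
      have hf'eq : f' = fun i => f i + d := by
        funext i
        have := congrFun h i
        rw [hd]
        linear_combination -this
      have hgd : Good f (s₀ - d) := by
        have h1 : Good (fun i => f i + d) ((s₀ - d) + d) ↔ Good f (s₀ - d) := good_shift f d _
        rw [sub_add_cancel] at h1
        exact h1.1 (hf'eq ▸ hf')
      obtain ⟨s, hs, huniq⟩ := existsUnique_good f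
      have e1 : s₀ - d = s := huniq _ hgd
      have e2 : s₀ = s := huniq _ hf
      have hd0 : d = 0 := by
        have : s₀ - d = s₀ := e1.trans e2.symm
        linear_combination -this
      have hcc : c = c' := by rw [hd] at hd0; linear_combination hd0
      have hff : f = f' := by rw [hf'eq, hd0]; funext i; simp
      subst hcc
      simp only [Prod.mk.injEq, Subtype.mk.injEq]
      exact ⟨hff, trivial⟩
    · intro g
      obtain ⟨s, hs, -⟩ := existsUnique_good g
      set c := s - s₀ with hc
      set f : Fin n → ZMod (n+1) := fun i => g i - c with hfdef
      have hgf : Good f s₀ := by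
        have h1 : Good (fun i => f i + c) (s₀ + c) ↔ Good f s₀ := good_shift f c s₀
        have e1 : (fun i => f i + c) = g := by funext i; rw [hfdef]; ring
        have e2 : s₀ + c = s := by rw [hc]; ring
        rw [e1, e2] at h1
        exact h1.1 hs
      exact ⟨⟨⟨f, hgf⟩, c⟩, by funext i; simp [hfdef]⟩
  have hcard := Nat.card_eq_of_bijective _ hbij
  rw [Nat.card_prod] at hcard
  have h1 : Nat.card (ZMod (n+1)) = n + 1 := by simp [Nat.card_eq_fintype_card]
  have h2 : Nat.card (Fin n → ZMod (n+1)) = (n+1)^n := by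
    rw [Nat.card_eq_fintype_card, Fintype.card_fun]
    simp
  rw [h1, h2] at hcard
  exact hcard

lemma parking_le (p : Fin n → ℕ)
    (h : ∀ r ∈ Finset.Icc 1 n, r ≤ #(univ.filter (fun i => p i ≤ r))) (i : Fin n) :
    p i ≤ n := by
  rcases Nat.eq_zero_or_pos n with rfl | hn
  · exact i.elim0
  · have hcard := h n (Finset.mem_Icc.2 ⟨hn, le_refl n⟩)
    have hsub : univ.filter (fun i => p i ≤ n) = univ := by
      apply Finset.eq_univ_of_card
      have hle : #(univ.filter (fun i => p i ≤ n)) ≤ #(univ : Finset (Fin n)) :=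
        Finset.card_filter_le _ _
      simp only [Finset.card_univ, Fintype.card_fin] at *
      omega
    have := Finset.mem_filter.1 (hsub ▸ Finset.mem_univ i)
    exact this.2


/-- The number of parking functions of size `n` is `(n+1)^(n-1)`. -/
theorem card_parkingFunctions (n : ℕ) :
    Nat.card {p : Fin n → ℕ // IsParkingFunction p} = (n + 1) ^ (n - 1) := by
  classical
  have hequiv : Nat.card {p : Fin n → ℕ // IsParkingFunction p}
      = Nat.card {f : Fin n → ZMod (n+1) // Good f (-1)} := by
    apply Nat.card_congr
    refine ⟨fun p => ⟨fun i => ((p.1 i - 1 : ℕ) : ZMod (n+1)), ?_⟩,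
            fun f => ⟨fun i => (f.1 i).val + 1, ?_⟩, ?_, ?_⟩
    · obtain ⟨hpos, hcnt⟩ := (isParkingFunction_iff p.1).1 p.2
      rw [good_neg_one_iff]
      intro r hr
      have hub := parking_le p.1 hcnt
      have heq : univ.filter (fun i => (((p.1 i - 1 : ℕ) : ZMod (n+1))).val < r)
          = univ.filter (fun i => p.1 i ≤ r) := by
        apply Finset.filter_congr
        intro i _
        rw [ZMod.val_cast_of_lt (by have := hub i; omega)]
        have := hpos i
        constructor <;> intro h <;> omega
      rw [heq]
      exact hcnt r hr
    · rw [isParkingFunction_iff]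
      refine ⟨fun i => by omega, ?_⟩
      intro r hr
      have hg := (good_neg_one_iff f.1).1 f.2 r hr
      have heq : univ.filter (fun i => (f.1 i).val + 1 ≤ r)
          = univ.filter (fun i => (f.1 i).val < r) := by
        apply Finset.filter_congr
        intro i _
        constructor <;> intro h <;> omega
      rw [heq]
      exact hg
    · intro p
      obtain ⟨hpos, hcnt⟩ := (isParkingFunction_iff p.1).1 p.2
      have hub := parking_le p.1 hcnt
      apply Subtype.ext
      funext i
      show (((p.1 i - 1 : ℕ) : ZMod (n+1))).val + 1 = p.1 i
      rw [ZMod.val_cast_of_lt (by have := hub i; omega)]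
      have := hpos i
      omega
    · intro f
      apply Subtype.ext
      funext i
      show (((f.1 i).val + 1 - 1 : ℕ) : ZMod (n+1)) = f.1 i
      simp [ZMod.natCast_val, ZMod.cast_id]
  rw [hequiv]
  have hmul := card_good_mul (n := n) (-1)
  rcases n with _ | n'
  · simpa using hmul
  · have hpow : (n'+1+1)^(n'+1) = (n'+1+1)^n' * (n'+1+1) := by rw [← pow_succ]
    rw [hpow] at hmul
    have hc := Nat.eq_of_mul_eq_mul_right (by omega : 0 < n'+1+1) hmul
    simpa using hc
end

section
/- The number of weakly increasing (sorted) parking functions of size n equals the n-th Catalan number C_n = (1/(n+1)) * binom(2n, n). -/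
open List DyckStep

namespace SPFaux

/-- Encode a weakly increasing list `l` (with `l[i] ≤ i`) as a Dyck word:
each entry `a` contributes the `D`s needed to bring the running `D`-count from `c`
up to `a`, followed by a `U`; at the end pad with `D`s up to `n`. -/
def toW (n : ℕ) : ℕ → List ℕ → List DyckStep
  | c, [] => List.replicate (n - c) D
  | c, a :: l => List.replicate (a - c) D ++ U :: toW n a l

/-- Decode: record the running `D`-count before each `U`. -/
def fromW : ℕ → List DyckStep → List ℕ
  | _, [] => []
  | c, U :: w => c :: fromW c w
  | c, D :: w => fromW (c + 1) w

lemma count_U_toW (n : ℕ) : ∀ c l, (toW n c l).count U = l.length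
  | c, [] => by simp [toW, count_replicate]
  | c, a :: l => by simp [toW, count_U_toW n a l, count_replicate]

lemma count_D_toW (n : ℕ) : ∀ c l, (∀ a ∈ l, c ≤ a ∧ a ≤ n) → l.Pairwise (· ≤ ·) → c ≤ n →
    (toW n c l).count D = n - c
  | c, [] => fun _ _ _ => by simp [toW]
  | c, a :: l => fun hb hs hc => by
    have h0 := hb a (mem_cons_self ..)
    have := count_D_toW n a l
      (fun b hbl => ⟨(List.pairwise_cons.1 hs).1 b hbl, (hb b (mem_cons_of_mem _ hbl)).2⟩)
      (List.pairwise_cons.1 hs).2 h0.2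
    simp only [toW, count_append, count_cons, count_replicate, this]
    simp
    omega

lemma toW_prefix (n : ℕ) : ∀ c u l, l.Pairwise (· ≤ ·) → (∀ a ∈ l, c ≤ a ∧ a ≤ n) →
    (∀ j (h : j < l.length), l[j] ≤ u + j) → n ≤ l.length + u → c ≤ n →
    ∀ i, ((toW n c l).take i).count D + c ≤ ((toW n c l).take i).count U + u
  | c, u, [] => fun _ _ _ hn hc i => by
    simp only [toW, take_replicate, count_replicate]
    simp only [length_nil, Nat.zero_add] at hn
    simp
    omega
  | c, u, a :: l => fun hs hb hg hn hc i => by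
    have h0 := hb a (mem_cons_self ..)
    have ha_u : a ≤ u := by exact hg 0 (by simp)
    have IH := toW_prefix n a (u + 1) l (List.pairwise_cons.1 hs).2
      (fun b hbl => ⟨(List.pairwise_cons.1 hs).1 b hbl, (hb b (mem_cons_of_mem _ hbl)).2⟩)
      (fun j h => by
        have := hg (j + 1) (by simpa using h)
        simp only [List.getElem_cons_succ] at this
        omega)
      (by simp at hn ⊢; omega) h0.2
    simp only [toW, take_append, count_append, take_replicate, count_replicate,
      length_replicate]
    rcases Nat.eq_zero_or_pos (i - (a - c)) with h | h
    · rw [h, take_zero]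
      simp
      omega
    · obtain ⟨j, hj⟩ : ∃ j, i - (a - c) = j + 1 := ⟨i - (a - c) - 1, by omega⟩
      rw [hj, take_succ_cons]
      have := IH j
      simp [count_cons] at this ⊢
      omega

lemma fromW_ge : ∀ c w, ∀ a ∈ fromW c w, c ≤ a
  | c, [] => by simp [fromW]
  | c, U :: w => by
    simp only [fromW, mem_cons]
    rintro a (rfl | h)
    · exact le_refl _
    · exact fromW_ge c w a h
  | c, D :: w => fun a h => le_trans (Nat.le_succ c) (fromW_ge (c + 1) w a h)

lemma fromW_sorted : ∀ c w, (fromW c w).Pairwise (· ≤ ·)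
  | _, [] => by simp [fromW]
  | c, U :: w => by
    simp only [fromW, pairwise_cons]
    exact ⟨fromW_ge c w, fromW_sorted c w⟩
  | c, D :: w => fromW_sorted (c + 1) w

lemma length_fromW : ∀ c w, (fromW c w).length = w.count U
  | _, [] => by simp [fromW]
  | c, U :: w => by simp [fromW, length_fromW c w, count_cons]
  | c, D :: w => by simp [fromW, length_fromW (c + 1) w, count_cons]

lemma fromW_get_le : ∀ c u w, (∀ i, (w.take i).count D + c ≤ (w.take i).count U + u) →
    ∀ j (h : j < (fromW c w).length), (fromW c w)[j] ≤ u + j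
  | c, u, [] => by simp [fromW]
  | c, u, U :: w => fun hpre j h => by
    have hpre' : ∀ i, (w.take i).count D + c ≤ (w.take i).count U + (u + 1) := fun i => by
      have := hpre (i + 1)
      simp [take_succ_cons, count_cons] at this
      omega
    cases j with
    | zero =>
      have h0 := hpre 0
      simp only [take_zero, count_nil, Nat.zero_add] at h0
      simp only [fromW, getElem_cons_zero]
      omega
    | succ j =>
      have := fromW_get_le c (u + 1) w hpre' j (by simp only [fromW, length_cons] at h; omega)
      simp only [fromW, getElem_cons_succ]
      omega
  | c, u, D :: w => fun hpre j h => by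
    have hpre' : ∀ i, (w.take i).count D + (c + 1) ≤ (w.take i).count U + u := fun i => by
      have := hpre (i + 1)
      simp [take_succ_cons, count_cons] at this
      omega
    exact fromW_get_le (c + 1) u w hpre' j h

lemma fromW_replicate : ∀ k c w, fromW c (List.replicate k D ++ w) = fromW (c + k) w
  | 0, c, w => by simp [fromW]
  | k + 1, c, w => by
    rw [replicate_succ, cons_append]
    show fromW (c + 1) _ = _
    rw [fromW_replicate k (c + 1) w]
    ring_nf

lemma fromW_toW (n : ℕ) : ∀ c l, l.Pairwise (· ≤ ·) → (∀ a ∈ l, c ≤ a) →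
    fromW c (toW n c l) = l
  | c, [] => fun _ _ => by
    show fromW c (List.replicate (n - c) D) = []
    rw [← List.append_nil (List.replicate (n - c) D), fromW_replicate]
    rfl
  | c, a :: l => fun hs hb => by
    have hca : c ≤ a := hb a (mem_cons_self ..)
    show fromW c (List.replicate (a - c) D ++ U :: toW n a l) = _
    rw [fromW_replicate]
    have : c + (a - c) = a := by omega
    rw [this]
    show a :: fromW a (toW n a l) = _
    rw [fromW_toW n a l (List.pairwise_cons.1 hs).2 (List.pairwise_cons.1 hs).1]

lemma toW_succ (n : ℕ) (c : ℕ) (hcn : c < n) : ∀ l, (∀ a ∈ l, c + 1 ≤ a) →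
    toW n c l = D :: toW n (c + 1) l
  | [] => fun _ => by
    show List.replicate (n - c) D = D :: List.replicate (n - (c + 1)) D
    have : n - c = (n - (c + 1)) + 1 := by omega
    rw [this, replicate_succ]
  | a :: l => fun hb => by
    have : a - c = (a - (c + 1)) + 1 := by have := hb a (mem_cons_self ..); omega
    show List.replicate (a - c) D ++ U :: toW n a l = D :: (List.replicate (a - (c+1)) D ++ U :: toW n a l)
    rw [this, replicate_succ, cons_append]

lemma toW_fromW (n : ℕ) : ∀ c w, c + w.count D = n → toW n c (fromW c w) = w
  | c, [] => fun h => by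
    simp only [count_nil, Nat.add_zero] at h
    show List.replicate (n - c) D = []
    simp [h]
  | c, U :: w => fun h => by
    show toW n c (c :: fromW c w) = _
    show List.replicate (c - c) D ++ U :: toW n c (fromW c w) = _
    rw [Nat.sub_self, replicate_zero, nil_append,
      toW_fromW n c w (by simpa [count_cons] using h)]
  | c, D :: w => fun h => by
    have hc : c + 1 + w.count D = n := by simp [count_cons] at h; omega
    show toW n c (fromW (c + 1) w) = _
    rw [toW_succ n c (by omega) _ (fromW_ge (c + 1) w),
      toW_fromW n (c + 1) w hc]

lemma sortedOf_of_monotone {n : ℕ} {p : Fin n → ℕ} (hm : Monotone p) :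
    sortedOf p = List.ofFn p := by
  apply List.Perm.eq_of_pairwise' (Multiset.pairwise_sort _ _) hm.sortedLE_ofFn.pairwise
  have := Multiset.sort_eq (α := ℕ) (Multiset.ofList (List.ofFn p)) (· ≤ ·)
  exact Quotient.exact this

lemma isParkingFunction_iff {n : ℕ} {p : Fin n → ℕ} (hm : Monotone p) :
    IsParkingFunction p ↔ ∀ i : Fin n, 1 ≤ p i ∧ p i ≤ (i : ℕ) + 1 := by
  unfold IsParkingFunction
  rw [sortedOf_of_monotone hm]
  constructor
  · rintro ⟨h1, h2⟩ i
    refine ⟨h1 i, ?_⟩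
    have := h2 i (Finset.mem_range.2 i.isLt)
    rwa [List.getD_eq_getElem _ _ (by simpa using i.isLt), List.getElem_ofFn] at this
  · intro h
    refine ⟨fun i => (h i).1, fun i hi => ?_⟩
    rw [Finset.mem_range] at hi
    rw [List.getD_eq_getElem _ _ (by simpa using hi), List.getElem_ofFn]
    exact (h ⟨i, hi⟩).2

/-- The encoding equivalence between sorted parking functions and Dyck words. -/
noncomputable def spfEquiv (n : ℕ) :
    {p : Fin n → ℕ // Monotone p ∧ IsParkingFunction p} ≃
      {w : DyckWord // w.semilength = n} where
  toFun x := by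
    obtain ⟨p, hm, hpk⟩ := x
    have hb := (isParkingFunction_iff hm).1 hpk
    set l : List ℕ := List.ofFn (fun i => p i - 1) with hl
    have hms : l.Pairwise (· ≤ ·) :=
      (Monotone.sortedLE_ofFn (fun i j hij => Nat.sub_le_sub_right (hm hij) 1)).pairwise
    have hget : ∀ j (h : j < l.length), l[j] ≤ 0 + j := by
      intro j h
      simp only [hl, List.getElem_ofFn]
      have := hb ⟨j, by simpa [hl] using h⟩
      simp at this ⊢
      omega
    have hbn : ∀ a ∈ l, 0 ≤ a ∧ a ≤ n := by
      intro a ha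
      rw [hl, List.mem_ofFn] at ha
      obtain ⟨i, rfl⟩ := ha
      have h1 := hb i
      have h2 := i.isLt
      show 0 ≤ p i - 1 ∧ p i - 1 ≤ n
      omega
    have hlen : l.length = n := by simp [hl]
    refine ⟨⟨toW n 0 l, ?_, ?_⟩, ?_⟩
    · rw [count_U_toW, count_D_toW n 0 l hbn hms (Nat.zero_le _), Nat.sub_zero, hlen]
    · intro i
      have := toW_prefix n 0 0 l hms hbn hget (by omega) (Nat.zero_le _) i
      omega
    · show (toW n 0 l).count U = n
      rw [count_U_toW, hlen]
  invFun x := by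
    obtain ⟨w, hw⟩ := x
    have hlen : (fromW 0 w.toList).length = n := by rw [length_fromW]; exact hw
    have hpre : ∀ i, (w.toList.take i).count D + 0 ≤ (w.toList.take i).count U + 0 := by
      intro i
      simpa using w.count_D_le_count_U i
    have hm : Monotone fun i : Fin n => (fromW 0 w.toList).getD i 0 + 1 := by
      intro i j hij
      have hii : (i : ℕ) < (fromW 0 w.toList).length := by rw [hlen]; exact i.isLt
      have hjj : (j : ℕ) < (fromW 0 w.toList).length := by rw [hlen]; exact j.isLt
      have := (fromW_sorted 0 w.toList).rel_get_of_le
        (a := ⟨i, hii⟩) (b := ⟨j, hjj⟩) (by simpa using hij)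
      simp only [List.get_eq_getElem] at this
      simp only [List.getD_eq_getElem _ _ hii, List.getD_eq_getElem _ _ hjj]
      omega
    refine ⟨fun i => (fromW 0 w.toList).getD i 0 + 1, hm, ?_⟩
    rw [isParkingFunction_iff hm]
    intro i
    have hii : (i : ℕ) < (fromW 0 w.toList).length := by rw [hlen]; exact i.isLt
    refine ⟨Nat.le_add_left _ _, ?_⟩
    have := fromW_get_le 0 0 w.toList hpre i hii
    rw [List.getD_eq_getElem _ _ hii]
    omega
  left_inv := by
    rintro ⟨p, hm, hpk⟩
    have hb := (isParkingFunction_iff hm).1 hpk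
    apply Subtype.ext
    funext i
    simp only
    have hms : (List.ofFn (fun i => p i - 1)).Pairwise (· ≤ ·) :=
      (Monotone.sortedLE_ofFn (fun i j hij => Nat.sub_le_sub_right (hm hij) 1)).pairwise
    rw [fromW_toW n 0 _ hms (fun a _ => Nat.zero_le a)]
    rw [List.getD_eq_getElem _ _ (by simpa using i.isLt)]
    simp only [List.getElem_ofFn]
    have := (hb i).1
    simp
    omega
  right_inv := by
    rintro ⟨w, hw⟩
    have hlen : (fromW 0 w.toList).length = n := by rw [length_fromW]; exact hw
    apply Subtype.ext
    apply DyckWord.ext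
    simp only
    have key : (List.ofFn fun i : Fin n => (fromW 0 w.toList).getD i 0 + 1 - 1)
        = fromW 0 w.toList := by
      apply List.ext_getElem (by simp [hlen])
      intro j h1 h2
      simp only [List.getElem_ofFn, Nat.add_sub_cancel]
      exact List.getD_eq_getElem _ _ h2
    rw [key]
    exact toW_fromW n 0 w.toList (by simpa [← DyckWord.semilength_eq_count_D] using hw)

end SPFaux

/-- The number of sorted (weakly increasing) parking functions of size `n` is
the `n`-th Catalan number. -/
theorem card_sorted_parkingFunctions (n : ℕ) :
    Nat.card {p : Fin n → ℕ // Monotone p ∧ IsParkingFunction p} = catalan n := by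
  rw [Nat.card_congr (SPFaux.spfEquiv n), Nat.card_eq_fintype_card,
    DyckWord.card_dyckWord_semilength_eq_catalan]
end

section
/- Let A(t) = ∑_{k≥1} P_{2k-1} t^{2k-1} and B(t) = ∑_{k≥1} P_{2k} t^{2k} be generating functions in the ring of symmetric functions, where P_m = (1/2) ∑_{i=0}^m h_i e_{m-i}. Then A^2 = B^2 + B. -/
open MvPolynomial Finset

variable (σ : Type*) [Fintype σ] [DecidableEq σ]

/-- The one-row Schur-P symmetric function `P_m = (1/2) ∑_{i=0}^m h_i e_{m-i}`. -/
noncomputable def schurP (m : ℕ) : MvPolynomial σ ℚ :=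
  (1 / 2 : ℚ) • ∑ i ∈ range (m + 1), hsymm σ ℚ i * esymm σ ℚ (m - i)

/-- The generating function `A(t) = ∑_{k ≥ 1} P_{2k-1} t^{2k-1}` of odd one-row
Schur-P functions. -/
noncomputable def genA : PowerSeries (MvPolynomial σ ℚ) :=
  PowerSeries.mk fun k => if Odd k then schurP σ k else 0

/-- The generating function `B(t) = ∑_{k ≥ 1} P_{2k} t^{2k}` of even one-row
Schur-P functions. -/
noncomputable def genB : PowerSeries (MvPolynomial σ ℚ) :=
  PowerSeries.mk fun k => if Even k ∧ k ≠ 0 then schurP σ k else 0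

section Aux

set_option linter.unusedSectionVars false

variable {σ}

lemma one_sub_mul_geom (x : MvPolynomial σ ℚ) :
    (1 - PowerSeries.C x * PowerSeries.X) * PowerSeries.mk (fun n => x ^ n) = 1 := by
  ext n
  rw [sub_mul, one_mul, mul_assoc, map_sub]
  cases n with
  | zero => simp
  | succ n =>
      rw [PowerSeries.coeff_C_mul, PowerSeries.coeff_succ_X_mul, PowerSeries.coeff_mk,
        PowerSeries.coeff_mk, pow_succ]
      simp [mul_comm]

lemma rescale_C' (a : MvPolynomial σ ℚ) (x : MvPolynomial σ ℚ) :
    PowerSeries.rescale a (PowerSeries.C x) = PowerSeries.C x := by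
  refine PowerSeries.ext fun n => ?_
  rw [PowerSeries.coeff_rescale]
  cases n with
  | zero => simp
  | succ n => simp

lemma prod_one_add_eq (s : Finset σ) :
    ∏ i ∈ s, (1 + PowerSeries.C (MvPolynomial.X i : MvPolynomial σ ℚ) * PowerSeries.X) =
      PowerSeries.mk
        (fun n => ∑ A ∈ powersetCard n s, ∏ i ∈ A, (MvPolynomial.X i : MvPolynomial σ ℚ)) := by
  induction s using Finset.induction with
  | empty =>
      refine PowerSeries.ext fun n => ?_
      cases n with
      | zero => simp
      | succ n => simp [Finset.powersetCard_eq_empty.mpr (by simp : (∅ : Finset σ).card < n + 1)]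
  | @insert a s ha ih =>
      rw [Finset.prod_insert ha, ih]
      refine PowerSeries.ext fun n => ?_
      rw [add_mul, one_mul, mul_assoc, map_add, PowerSeries.coeff_mk]
      cases n with
      | zero =>
          simp
      | succ n =>
          rw [PowerSeries.coeff_C_mul, PowerSeries.coeff_succ_X_mul, PowerSeries.coeff_mk,
            PowerSeries.coeff_mk, powersetCard_succ_insert ha]
          rw [Finset.sum_union ?hdisj, Finset.sum_image ?hinj]
          case hdisj =>
            rw [Finset.disjoint_left]
            intro t ht ht'
            rw [Finset.mem_powersetCard] at ht
            obtain ⟨t', ht', rfl⟩ := Finset.mem_image.mp ht'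
            exact ha (ht.1 (Finset.mem_insert_self a t'))
          case hinj =>
            intro t₁ h₁ t₂ h₂ h
            rw [Finset.mem_coe, Finset.mem_powersetCard] at h₁ h₂
            have e₁ : a ∉ t₁ := fun hh => ha (h₁.1 hh)
            have e₂ : a ∉ t₂ := fun hh => ha (h₂.1 hh)
            rw [← Finset.erase_insert e₁, ← Finset.erase_insert e₂, h]
          rw [Finset.mul_sum]
          congr 1
          refine Finset.sum_congr rfl fun t ht => ?_
          rw [Finset.mem_powersetCard] at ht
          rw [Finset.prod_insert (fun hh => ha (ht.1 hh))]

lemma sum_univ_finsupp (l : σ →₀ ℕ) : (l.sum fun _ => id) = ∑ i, l i :=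
  Finsupp.sum_fintype _ _ (fun _ => rfl)

lemma prod_geom_eq :
    ∏ i : σ, PowerSeries.mk (fun n => (MvPolynomial.X i : MvPolynomial σ ℚ) ^ n) =
      PowerSeries.mk (fun n => hsymm σ ℚ n) := by
  refine PowerSeries.ext fun n => ?_
  rw [PowerSeries.coeff_prod, PowerSeries.coeff_mk, hsymm]
  refine Finset.sum_bij' (t := (Finset.univ : Finset (Sym σ n)))
    (fun l hl => (⟨Finsupp.toMultiset l, by
      rw [Finset.mem_finsuppAntidiag] at hl
      rw [Finsupp.card_toMultiset, sum_univ_finsupp]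
      exact hl.1⟩ : Sym σ n))
    (fun m _ => Multiset.toFinsupp m.1)
    (fun l hl => Finset.mem_univ _)
    (fun m hm => by
      rw [Finset.mem_finsuppAntidiag]
      refine ⟨?_, fun i _ => Finset.mem_univ i⟩
      rw [show (Finset.univ.sum (Multiset.toFinsupp m.1) : ℕ)
            = ∑ i, Multiset.toFinsupp m.1 i from rfl,
        ← sum_univ_finsupp, Multiset.toFinsupp_sum_eq, m.2])
    (fun l hl => by simp)
    (fun m hm => Subtype.ext (Multiset.toFinsupp_toMultiset m.1))
    (fun l hl => ?_)
  simp only [PowerSeries.coeff_mk]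
  rw [Finset.prod_multiset_map_count, Finsupp.toFinset_toMultiset]
  simp_rw [Finsupp.count_toMultiset]
  exact (Finset.prod_subset (Finset.subset_univ _) fun i _ hi => by
    rw [Finsupp.notMem_support_iff.mp hi, pow_zero]).symm

lemma Ebar_mul_H :
    (PowerSeries.rescale (-1) (PowerSeries.mk fun n => esymm σ ℚ n)) *
      PowerSeries.mk (fun n => hsymm σ ℚ n) = 1 := by
  have hE : PowerSeries.mk (fun n => esymm σ ℚ n) =
      ∏ i : σ, (1 + PowerSeries.C (MvPolynomial.X i : MvPolynomial σ ℚ) * PowerSeries.X) := by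
    rw [prod_one_add_eq]
    rfl
  rw [hE, map_prod, ← prod_geom_eq, ← Finset.prod_mul_distrib]
  refine Finset.prod_eq_one fun i _ => ?_
  have hres : PowerSeries.rescale (-1 : MvPolynomial σ ℚ)
      (1 + PowerSeries.C (MvPolynomial.X i) * PowerSeries.X) =
      1 - PowerSeries.C (MvPolynomial.X i) * PowerSeries.X := by
    rw [map_add, map_one, map_mul, rescale_C', PowerSeries.rescale_neg_one_X]
    ring
  rw [hres, one_sub_mul_geom]

lemma two_eq_C : (2 : PowerSeries (MvPolynomial σ ℚ)) = PowerSeries.C 2 :=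
  (map_ofNat (PowerSeries.C (R := MvPolynomial σ ℚ)) 2).symm

lemma two_mul_F :
    (2 : PowerSeries (MvPolynomial σ ℚ)) * PowerSeries.mk (schurP σ) =
      PowerSeries.mk (fun n => hsymm σ ℚ n) * PowerSeries.mk (fun n => esymm σ ℚ n) := by
  refine PowerSeries.ext fun n => ?_
  rw [two_eq_C, PowerSeries.coeff_C_mul, PowerSeries.coeff_mk, PowerSeries.coeff_mul,
    Finset.Nat.sum_antidiagonal_eq_sum_range_succ_mk]
  simp only [PowerSeries.coeff_mk]
  rw [schurP, MvPolynomial.smul_eq_C_mul, ← mul_assoc,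
    show (2 : MvPolynomial σ ℚ) * MvPolynomial.C (1 / 2 : ℚ) = 1 by
      rw [← map_ofNat (MvPolynomial.C : ℚ →+* MvPolynomial σ ℚ) 2, ← MvPolynomial.C_mul]
      norm_num,
    one_mul]

lemma two_genA :
    (2 : PowerSeries (MvPolynomial σ ℚ)) * genA σ =
      PowerSeries.mk (schurP σ) -
        PowerSeries.rescale (-1) (PowerSeries.mk (schurP σ)) := by
  refine PowerSeries.ext fun k => ?_
  rw [map_sub, PowerSeries.coeff_rescale, PowerSeries.coeff_mk,
    two_eq_C, PowerSeries.coeff_C_mul, genA, PowerSeries.coeff_mk]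
  by_cases hk : Odd k
  · rw [if_pos hk, hk.neg_one_pow]
    ring
  · rw [if_neg hk, (Nat.not_odd_iff_even.mp hk).neg_one_pow]
    ring

lemma schurP_zero' : schurP σ 0 = MvPolynomial.C (1 / 2 : ℚ) := by
  simp [schurP, MvPolynomial.smul_eq_C_mul]

lemma two_genB :
    (2 : PowerSeries (MvPolynomial σ ℚ)) * genB σ + 1 =
      PowerSeries.mk (schurP σ) +
        PowerSeries.rescale (-1) (PowerSeries.mk (schurP σ)) := by
  refine PowerSeries.ext fun k => ?_
  rw [map_add, map_add, PowerSeries.coeff_rescale, PowerSeries.coeff_mk,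
    two_eq_C, PowerSeries.coeff_C_mul, genB, PowerSeries.coeff_mk, PowerSeries.coeff_one]
  rcases eq_or_ne k 0 with rfl | hk
  · rw [if_neg (by simp), if_pos rfl, schurP_zero']
    rw [pow_zero, one_mul, mul_zero, zero_add, ← MvPolynomial.C_add]
    norm_num
  · rw [if_neg hk]
    by_cases he : Even k
    · rw [if_pos ⟨he, hk⟩, he.neg_one_pow]
      ring
    · rw [if_neg (fun h => he h.1), (Nat.not_even_iff_odd.mp he).neg_one_pow]
      ring

end Aux

/-- The identity `A² = B² + B` of formal power series with symmetric function
coefficients. -/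
theorem genA_sq_eq_genB_sq_add_genB :
    genA σ * genA σ = genB σ * genB σ + genB σ := by
  classical
  set F : PowerSeries (MvPolynomial σ ℚ) := PowerSeries.mk (schurP σ) with hF
  set Fb : PowerSeries (MvPolynomial σ ℚ) := PowerSeries.rescale (-1) F with hFb
  have h2A := two_genA (σ := σ)
  have h2B := two_genB (σ := σ)
  have hFF : (4 : PowerSeries (MvPolynomial σ ℚ)) * (F * Fb) = 1 := by
    have h1 : (2 : PowerSeries (MvPolynomial σ ℚ)) * Fb =
        PowerSeries.rescale (-1) ((2 : PowerSeries (MvPolynomial σ ℚ)) * F) := by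
      rw [map_mul, map_ofNat]
    have hE := Ebar_mul_H (σ := σ)
    have hE2 : (PowerSeries.mk fun n => esymm σ ℚ n) *
        PowerSeries.rescale (-1) (PowerSeries.mk fun n => hsymm σ ℚ n) = 1 := by
      have h3 := congrArg (PowerSeries.rescale (-1)) hE
      rwa [map_mul, map_one, PowerSeries.rescale_rescale,
        show ((-1 : MvPolynomial σ ℚ) * -1) = 1 by ring, PowerSeries.rescale_one,
        RingHom.id_apply] at h3
    calc (4 : PowerSeries (MvPolynomial σ ℚ)) * (F * Fb)
        = ((2 : PowerSeries (MvPolynomial σ ℚ)) * F) *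
          ((2 : PowerSeries (MvPolynomial σ ℚ)) * Fb) := by ring
      _ = ((PowerSeries.mk fun n => hsymm σ ℚ n) * PowerSeries.mk fun n => esymm σ ℚ n) *
          (PowerSeries.rescale (-1) ((PowerSeries.mk fun n => hsymm σ ℚ n) *
            PowerSeries.mk fun n => esymm σ ℚ n)) := by
          rw [h1, two_mul_F]
      _ = ((PowerSeries.rescale (-1) (PowerSeries.mk fun n => esymm σ ℚ n)) *
            PowerSeries.mk (fun n => hsymm σ ℚ n)) *
          ((PowerSeries.mk fun n => esymm σ ℚ n) *
            PowerSeries.rescale (-1) (PowerSeries.mk fun n => hsymm σ ℚ n)) := by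
          rw [map_mul]
          ring
      _ = 1 := by rw [hE, hE2, one_mul]
  have key : (4 : PowerSeries (MvPolynomial σ ℚ)) * (genA σ * genA σ) =
      (4 : PowerSeries (MvPolynomial σ ℚ)) * (genB σ * genB σ + genB σ) := by
    linear_combination (2 * genA σ + F - Fb) * h2A - (2 * genB σ + 1 + F + Fb) * h2B - hFF
  refine mul_left_cancel₀ ?_ key
  intro h
  have h4 := congrArg (PowerSeries.constantCoeff (R := MvPolynomial σ ℚ)) h
  simp only [map_ofNat, map_zero] at h4
  exact (by norm_num : (4 : MvPolynomial σ ℚ) ≠ 0) h4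
end

section
/- For an odd partition μ of n with ℓ = ℓ(μ) parts, the odd Kreweras number satisfies OKrew(μ) = Krew(μ) · binom(n+ℓ, (n+ℓ)/2) / binom(n, (n+ℓ)/2), where Krew(μ) = (1/(n-ℓ+1)) · n! / (m_1(μ)! m_2(μ)! ⋯ m_n(μ)! (n-ℓ)!) and OKrew(μ) = (2^ℓ/ℓ!) · (ℓ! / ∏_{i odd} m_i(μ)!) · (n+ℓ-1)(n+ℓ-3)⋯(n-ℓ+3). -/
open Finset

/-- The Kreweras number of a partition `μ ⊢ n` with `ℓ` parts:
`Krew(μ) = (1/(n-ℓ+1)) · n! / (m_1! ⋯ m_n! (n-ℓ)!)`. -/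
noncomputable def krew (n : ℕ) (μ : n.Partition) : ℚ :=
  (1 / ((n : ℚ) - μ.parts.card + 1)) * (n.factorial : ℚ) /
    ((∏ i ∈ Icc 1 n, ((μ.parts.count i).factorial : ℚ)) *
      ((n - μ.parts.card).factorial : ℚ))

/-- The odd Kreweras number of an odd partition `μ ⊢ n` with `ℓ` parts:
`OKrew(μ) = (2^ℓ/ℓ!) · (ℓ!/∏_{i odd} m_i!) · (n+ℓ-1)(n+ℓ-3)⋯(n-ℓ+3)`. -/
noncomputable def okrew (n : ℕ) (μ : n.Partition) : ℚ :=
  (2 ^ μ.parts.card / (μ.parts.card.factorial : ℚ)) *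
    ((μ.parts.card.factorial : ℚ) /
      ∏ i ∈ (Icc 1 n).filter (fun i => Odd i), ((μ.parts.count i).factorial : ℚ)) *
    ∏ t ∈ range (μ.parts.card - 1), ((n : ℚ) + μ.parts.card - 1 - 2 * t)


lemma key_prod (a : ℕ) : ∀ k : ℕ,
    (((2*a+2*(k+1)).factorial : ℚ)) * a.factorial =
      2^(k+1) * ((2*a+1).factorial) * ((a+(k+1)).factorial) *
        ∏ t ∈ range k, (2*(a:ℚ)+2*((k:ℚ)+1)-1-2*t) := by
  intro k
  induction k with
  | zero =>
    simp only [range_zero, prod_empty, mul_one]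
    have h1 : 2*a+2*(0+1) = (2*a+1)+1 := by ring
    have h2 : a+(0+1) = a+1 := rfl
    rw [h1, h2, Nat.factorial_succ, Nat.factorial_succ a]
    push_cast
    ring
  | succ k ih =>
    have h1 : 2*a+2*(k+1+1) = (2*a+2*(k+1)+1)+1 := by ring
    rw [h1, Nat.factorial_succ, Nat.factorial_succ (2*a+2*(k+1))]
    have h2 : a+(k+1+1) = (a+(k+1))+1 := by ring
    rw [h2, Nat.factorial_succ (a+(k+1))]
    have h3 : ∏ t ∈ range (k+1), (2*(a:ℚ)+2*(((k+1):ℕ)+1:ℚ)-1-2*t)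
        = (∏ t ∈ range k, (2*(a:ℚ)+2*((k:ℚ)+1)-1-2*t)) * (2*(a:ℚ)+2*k+3) := by
      rw [prod_range_succ']
      congr 1
      · apply prod_congr rfl; intro t _; push_cast; ring
      · push_cast; ring
    rw [h3]
    push_cast
    push_cast at ih
    linear_combination ((2*(a:ℚ)+2*k+4)*(2*(a:ℚ)+2*k+3)) * ih

lemma even_sum_add_card (s : Multiset ℕ) (h : ∀ p ∈ s, Odd p) : Even (s.sum + Multiset.card s) := by
  induction s using Multiset.induction with
  | empty => simp
  | cons p s ih =>
    obtain ⟨c, hc⟩ := h p (Multiset.mem_cons_self p s)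
    obtain ⟨d, hd⟩ := ih (fun q hq => h q (Multiset.mem_cons_of_mem hq))
    exact ⟨c + d + 1, by simp [hc, hd]; omega⟩

/-- For an odd partition `μ ⊢ n` with `ℓ` parts,
`OKrew(μ) = Krew(μ) · binom(n+ℓ, (n+ℓ)/2) / binom(n, (n+ℓ)/2)`. -/
theorem okrew_eq_krew_mul_ratio (n : ℕ) (μ : n.Partition)
    (hodd : ∀ p ∈ μ.parts, Odd p) :
    okrew n μ =
      krew n μ * ((n + μ.parts.card).choose ((n + μ.parts.card) / 2) : ℚ) /
        ((n.choose ((n + μ.parts.card) / 2)) : ℚ) := by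
  have hsum : μ.parts.sum = n := μ.parts_sum
  have hln : μ.parts.card ≤ n := by
    have := Multiset.card_nsmul_le_sum (s := μ.parts) (a := 1) (fun x hx => μ.parts_pos hx)
    simpa [hsum] using this
  have hpar := even_sum_add_card μ.parts hodd
  rw [hsum] at hpar
  obtain ⟨a, ha⟩ : ∃ a, n = μ.parts.card + 2*a := by
    obtain ⟨e, he⟩ := hpar
    exact ⟨(n - μ.parts.card)/2, by omega⟩
  set ℓ := μ.parts.card with hℓ
  rcases Nat.eq_zero_or_pos ℓ with h0 | hpos
  · -- ℓ = 0, so n = 0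
    have hp0 : μ.parts = 0 := Multiset.card_eq_zero.mp h0
    have hn0 : n = 0 := by rw [← hsum, hp0]; rfl
    subst hn0
    simp [okrew, krew, h0, ← hℓ]
  · obtain ⟨k, hk⟩ : ∃ k, ℓ = k + 1 := ⟨ℓ - 1, by omega⟩
    -- product over odd filter equals full product
    have hfil : (∏ i ∈ (Icc 1 n).filter (fun i => Odd i), ((μ.parts.count i).factorial : ℚ))
        = ∏ i ∈ Icc 1 n, ((μ.parts.count i).factorial : ℚ) := by
      refine prod_subset (filter_subset _ _) (fun x hx hx2 => ?_)
      have : ¬ Odd x := fun h => hx2 (mem_filter.mpr ⟨hx, h⟩)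
      have hc : μ.parts.count x = 0 := by
        rw [Multiset.count_eq_zero]
        exact fun hmem => this (hodd x hmem)
      simp [hc]
    set P : ℚ := ∏ i ∈ Icc 1 n, ((μ.parts.count i).factorial : ℚ) with hPdef
    have hP : P ≠ 0 := by
      refine prod_ne_zero_iff.mpr (fun i _ => ?_)
      exact_mod_cast (Nat.factorial_pos _).ne'
    have e1 : n + ℓ = 2*a + 2*ℓ := by omega
    have e2 : (n + ℓ)/2 = a + ℓ := by omega
    have e3 : n - ℓ = 2*a := by omega
    have hch1 : (((n + ℓ).choose ((n + ℓ)/2)) : ℚ)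
        = ((2*a+2*ℓ).factorial : ℚ) / (((a+ℓ).factorial : ℚ) * ((a+ℓ).factorial : ℚ)) := by
      rw [e2, e1, Nat.cast_choose ℚ (by omega : a + ℓ ≤ 2*a+2*ℓ)]
      have : 2*a+2*ℓ - (a+ℓ) = a+ℓ := by omega
      rw [this]
    have hch2 : ((n.choose ((n + ℓ)/2)) : ℚ)
        = ((n).factorial : ℚ) / (((a+ℓ).factorial : ℚ) * (a.factorial : ℚ)) := by
      rw [e2, Nat.cast_choose ℚ (by omega : a + ℓ ≤ n)]
      have : n - (a+ℓ) = a := by omega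
      rw [this]
    have hch2ne : ((n.choose ((n + ℓ)/2)) : ℚ) ≠ 0 := by
      rw [e2]
      exact_mod_cast (Nat.choose_pos (by omega : a + ℓ ≤ n)).ne'
    have hnQ : (n : ℚ) = ℓ + 2*a := by exact_mod_cast congrArg (Nat.cast (R := ℚ)) ha
    -- the descending product
    have hD : (∏ t ∈ range (ℓ - 1), ((n : ℚ) + ℓ - 1 - 2 * t))
        = ∏ t ∈ range k, (2*(a:ℚ)+2*((k:ℚ)+1)-1-2*t) := by
      rw [hk]
      simp only [Nat.add_sub_cancel]
      refine prod_congr rfl (fun t _ => ?_)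
      rw [hnQ, hk]
      push_cast
      ring
    have key := key_prod a k
    rw [← hk] at key
    have hfa : (a.factorial : ℚ) ≠ 0 := by exact_mod_cast (Nat.factorial_pos _).ne'
    have hkey2 : ((2*a+2*ℓ).factorial : ℚ)
        = 2^ℓ * ((2*a+1).factorial : ℚ) * ((a+ℓ).factorial : ℚ) *
            (∏ t ∈ range k, (2*(a:ℚ)+2*((k:ℚ)+1)-1-2*t)) / (a.factorial : ℚ) := by
      rw [eq_div_iff hfa]
      rw [hk] at key ⊢
      linarith [key]
    have hfact21 : ((2*a+1).factorial : ℚ) = (2*(a:ℚ)+1) * ((2*a).factorial : ℚ) := by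
      rw [Nat.factorial_succ]
      push_cast
      ring
    rw [okrew, krew, hfil, ← hℓ, ← hPdef, hch1, hch2, hD, e3, hkey2, hfact21]
    have hfl : ((ℓ.factorial : ℚ)) ≠ 0 := by exact_mod_cast (Nat.factorial_pos _).ne'
    have hf2a : (((2*a).factorial : ℚ)) ≠ 0 := by exact_mod_cast (Nat.factorial_pos _).ne'
    have hfal : (((a+ℓ).factorial : ℚ)) ≠ 0 := by exact_mod_cast (Nat.factorial_pos _).ne'
    have hfn : ((n.factorial : ℚ)) ≠ 0 := by exact_mod_cast (Nat.factorial_pos _).ne'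
    have hden : (n : ℚ) - ℓ + 1 ≠ 0 := by
      rw [hnQ]
      have : ((ℓ:ℚ) + 2*a) - ℓ + 1 = 2*a+1 := by ring
      rw [this]
      positivity
    rw [hnQ]
    field_simp
    ring_nf
    have h2a1 : (1 + (a:ℚ)*2) ≠ 0 := by positivity
    field_simp
    ring
end

section
/- The number of sorted naive shifted parking functions of size n equals the n-th large Schröder number s_n. -/
open Finset

/-- The large Schröder numbers:
`s_0 = 1`, `s_1 = 2`, `s_n = 3 s_{n-1} + ∑_{k=1}^{n-2} s_k s_{n-k-1}`. -/
def schroeder : ℕ → ℕ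
  | 0 => 1
  | 1 => 2
  | (n + 2) =>
      3 * schroeder (n + 1) +
        ∑ k ∈ (Icc 1 n).attach, schroeder k.1 * schroeder (n + 1 - k.1)
  termination_by n => n
  decreasing_by
  · omega
  · have := k.2; rw [Finset.mem_Icc] at this; omega
  · have := k.2; rw [Finset.mem_Icc] at this; omega


lemma schroeder_succ_succ (n : ℕ) :
    schroeder (n+2) = 3 * schroeder (n+1) + ∑ k ∈ Icc 1 n, schroeder k * schroeder (n+1-k) := by
  rw [schroeder]
  congr 1
  exact Finset.sum_attach (Icc 1 n) (fun k => schroeder k * schroeder (n+1-k))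

def G : ℕ → ℕ → ℕ
  | 0, _ => 1
  | n+1, a => G n (a+1) + 2 * ∑ j ∈ Finset.range a, G n (a - j)

lemma G_zero (a : ℕ) : G 0 a = 1 := rfl
lemma G_succ (n a : ℕ) : G (n+1) a = G n (a+1) + 2 * ∑ j ∈ Finset.range a, G n (a - j) := rfl
lemma G_succ_zero (n : ℕ) : G (n+1) 0 = G n 1 := by simp [G_succ]

lemma G_key : ∀ n : ℕ,
    (∀ a, G n (a+1) = ∑ k ∈ range (n+1), schroeder k * G (n-k) a) ∧
      (schroeder (n+1) = 2 * G n 1) := by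
  intro n
  induction n using Nat.strong_induction_on with
  | _ n ih =>
  have hI : ∀ a, G n (a+1) = ∑ k ∈ range (n+1), schroeder k * G (n-k) a := by
    match n with
    | 0 => intro a; simp [G_zero, schroeder]
    | (m+1) =>
      intro a
      have Im := (ih m (by omega)).1
      have IIm := (ih m (by omega)).2
      have expand : ∀ k ∈ range (m+1), schroeder k * G (m+1-k) a
          = schroeder k * G (m-k) (a+1) + 2 * ∑ j ∈ range a, schroeder k * G (m-k) (a-j) := by
        intro k hk
        rw [mem_range] at hk
        have : m + 1 - k = (m - k) + 1 := by omega
        rw [this, G_succ, mul_add, mul_left_comm, Finset.mul_sum]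
      calc G (m+1) (a+1)
          = G m (a+2) + 2 * ((∑ j ∈ range a, G m (a+1-j)) + G m (a+1-a)) := by
            rw [G_succ, Finset.sum_range_succ]
        _ = G m (a+2) + 2 * ∑ j ∈ range a, G m ((a-j)+1) + 2 * G m 1 := by
            have h1 : a + 1 - a = 1 := by omega
            have h2 : ∀ j ∈ range a, G m (a+1-j) = G m ((a-j)+1) := by
              intro j hj; rw [mem_range] at hj; congr 1; omega
            rw [h1, Finset.sum_congr rfl h2]; ring
        _ = (∑ k ∈ range (m+1), schroeder k * G (m-k) (a+1))
            + 2 * ∑ j ∈ range a, ∑ k ∈ range (m+1), schroeder k * G (m-k) (a-j)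
            + schroeder (m+1) := by
            rw [← Im (a+1), ← IIm]
            congr 2
            congr 1
            exact Finset.sum_congr rfl (fun j hj => Im (a-j))
        _ = ∑ k ∈ range (m+2), schroeder k * G (m+1-k) a := by
            have e0 : (m:ℕ) + 1 - (m+1) = 0 := by omega
            rw [Finset.sum_range_succ (n := m+1), e0, G_zero, mul_one,
              Finset.sum_congr rfl expand, Finset.sum_add_distrib]
            congr 2
            rw [← Finset.mul_sum, Finset.sum_comm]
  refine ⟨hI, ?_⟩
  match n with
  | 0 => simp [schroeder, G]
  | (m+1) =>
    have h0 : G (m+1) 1 = ∑ k ∈ range (m+2), schroeder k * G (m+1-k) 0 := by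
      simpa using hI 0
    have h1 : 2 * G (m+1) 1 = ∑ k ∈ range (m+2), schroeder k * (2 * G (m+1-k) 0) := by
      rw [h0, Finset.mul_sum]; apply Finset.sum_congr rfl; intros; ring
    have h2 : ∀ k ∈ range (m+1), schroeder k * (2 * G (m+1-k) 0)
        = schroeder k * schroeder (m+1-k) := by
      intro k hk; rw [mem_range] at hk
      have e : m + 1 - k = (m - k) + 1 := by omega
      rw [e, G_succ_zero, ← (ih (m-k) (by omega)).2]
    rw [h1, Finset.sum_range_succ, Finset.sum_congr rfl h2]
    have e0 : (m:ℕ) + 1 - (m+1) = 0 := by omega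
    rw [e0, G_zero, schroeder_succ_succ]
    rw [Finset.sum_range_succ' (fun k => schroeder k * schroeder (m+1-k)) m]
    have : ∑ k ∈ Icc 1 m, schroeder k * schroeder (m+1-k)
        = ∑ k ∈ range m, schroeder (k+1) * schroeder (m+1-(k+1)) := by
      rw [← Finset.Ico_add_one_right_eq_Icc, Finset.sum_Ico_eq_sum_range]
      apply Finset.sum_congr (by congr 1)
      intro j hj; rw [mem_range] at hj; congr 2 <;> omega
    rw [this]
    simp [schroeder, mul_one]
    ring


/-- A sorted naive shifted parking function of size `n`: a pair `(p, σ̄)` with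
`p` a weakly increasing parking function (each `p i` positive and at most `i`,
1-indexed) and `σ̄ ∈ {-1,0,1}ⁿ` (indexed by the values `1, …, n`) with
`σ̄_k = 0` iff no entry of `p` equals `k`. -/
def IsSortedNaiveShiftedPF (n : ℕ) (p : Fin n → ℕ) (σ : Fin n → ℤ) : Prop :=
  Monotone p ∧ (∀ i : Fin n, 0 < p i ∧ p i ≤ (i : ℕ) + 1) ∧
    ∀ k : Fin n, (σ k = -1 ∨ σ k = 0 ∨ σ k = 1) ∧
      (σ k = 0 ↔ ∀ j : Fin n, p j ≠ (k : ℕ) + 1)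

namespace SNSPF

abbrev Γ : Type := Option (Bool × ℕ)

def jump : Γ → ℕ
  | none => 0
  | some (_, j) => j + 1

@[simp] lemma jump_none : jump none = 0 := rfl
@[simp] lemma jump_some (b : Bool) (j : ℕ) : jump (some (b, j)) = j + 1 := rfl

def gext {n : ℕ} (d : Fin n → Γ) (t : ℕ) : Γ :=
  if h : t < n then d ⟨t, h⟩ else none

lemma gext_lt {n : ℕ} (d : Fin n → Γ) {t : ℕ} (h : t < n) : gext d t = d ⟨t, h⟩ := dif_pos h

def pS {n : ℕ} (d : Fin n → Γ) (i : ℕ) : ℕ :=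
  ∑ t ∈ Finset.range i, jump (gext d t)

@[simp] lemma pS_zero {n} (d : Fin n → Γ) : pS d 0 = 0 := rfl

lemma pS_succ {n} (d : Fin n → Γ) (i : ℕ) : pS d (i+1) = pS d i + jump (gext d i) :=
  Finset.sum_range_succ _ i

lemma pS_mono {n} (d : Fin n → Γ) : Monotone (pS d) := fun i j h =>
  Finset.sum_le_sum_of_subset (by intro x hx; simp only [Finset.mem_range] at hx ⊢; omega)

lemma gext_cons_zero {m} (c : Γ) (f : Fin m → Γ) : gext (Fin.cons c f : Fin (m+1) → Γ) 0 = c := by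
  rw [gext_lt _ (Nat.succ_pos m)]; simp

lemma gext_cons_succ {m} (c : Γ) (f : Fin m → Γ) (t : ℕ) :
    gext (Fin.cons c f : Fin (m+1) → Γ) (t+1) = gext f t := by
  unfold gext
  by_cases h : t < m
  · rw [dif_pos (by omega : t+1 < m+1), dif_pos h]
    exact Fin.cons_succ (α := fun _ => Γ) c f ⟨t, h⟩
  · rw [dif_neg (by omega), dif_neg h]

lemma pS_cons {m} (c : Γ) (f : Fin m → Γ) (i : ℕ) :
    pS (Fin.cons c f : Fin (m+1) → Γ) (i+1) = jump c + pS f i := by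
  unfold pS
  rw [Finset.sum_range_succ' (fun t => jump (gext (Fin.cons c f : Fin (m+1) → Γ) t)) i]
  simp only [gext_cons_succ, gext_cons_zero]
  exact Nat.add_comm _ _

lemma pS_eq_cons {m} (d : Fin (m+1) → Γ) (i : ℕ) :
    pS d (i+1) = jump (d 0) + pS (Fin.tail d) i := by
  conv_lhs => rw [← Fin.cons_self_tail d]
  exact pS_cons _ _ _

lemma pS_one {n} (d : Fin (n+1) → Γ) : pS d 1 = jump (d 0) := by
  rw [pS_eq_cons]; simp

lemma pS_cons_one {m} (c : Γ) (f : Fin m → Γ) :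
    pS (Fin.cons c f : Fin (m+1) → Γ) 1 = jump c := by
  rw [pS_cons]; simp

def V (m a : ℕ) : Type := {d : Fin m → Γ // ∀ i : Fin m, pS d ((i:ℕ)+1) ≤ (i:ℕ) + a}

def W (n : ℕ) : Type :=
  {d : Fin n → Γ // ∀ i : Fin n, 1 ≤ pS d ((i:ℕ)+1) ∧ pS d ((i:ℕ)+1) ≤ (i:ℕ) + 1}

instance uniqueV0 (a : ℕ) : Unique (V 0 a) where
  default := ⟨fun i => i.elim0, fun i => i.elim0⟩
  uniq := fun x => Subtype.ext (funext fun i => i.elim0)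

instance uniqueW0 : Unique (W 0) where
  default := ⟨fun i => i.elim0, fun i => i.elim0⟩
  uniq := fun x => Subtype.ext (funext fun i => i.elim0)

/-- inverse-direction map for the `V` recursion -/
def vphi (m a : ℕ) : (V m (a+1)) ⊕ (Σ j : Fin a, Bool × V m (a - (j:ℕ))) → V (m+1) a
  | Sum.inl ⟨f, hf⟩ => ⟨Fin.cons none f, by
      intro i
      induction i using Fin.cases with
      | zero => simp [pS_cons_one]
      | succ t =>
        have := hf t
        rw [Fin.val_succ, pS_cons]
        simp only [jump_none]
        omega⟩
  | Sum.inr ⟨j, b, f, hf⟩ => ⟨Fin.cons (some (b, (j:ℕ))) f, by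
      intro i
      induction i using Fin.cases with
      | zero =>
        have := j.isLt
        simp only [Fin.val_zero, Nat.zero_add, pS_cons_one, jump_some]
        omega
      | succ t =>
        have hft := hf t
        have := j.isLt
        rw [Fin.val_succ, pS_cons]
        simp only [jump_some]
        omega⟩

lemma vphi_bij (m a : ℕ) : Function.Bijective (vphi m a) := by
  constructor
  · rintro (⟨f1, hf1⟩ | ⟨j1, b1, f1, hf1⟩) (⟨f2, hf2⟩ | ⟨j2, b2, f2, hf2⟩) h <;>
      [skip; skip; skip; skip] <;>
      (replace h := congrArg Subtype.val h; simp only [vphi] at h)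
    · have : f1 = f2 := by
        have := congrArg Fin.tail h; simpa [Fin.tail_cons] using this
      simp [this]
    · exact absurd (congrFun h 0) (by simp)
    · exact absurd (congrFun h 0) (by simp)
    · have h0 := congrFun h 0
      simp only [Fin.cons_zero, Option.some.injEq, Prod.mk.injEq] at h0
      have hj : j1 = j2 := Fin.ext h0.2
      have hb : b1 = b2 := h0.1
      have hf : f1 = f2 := by
        have := congrArg Fin.tail h; simpa [Fin.tail_cons] using this
      subst hj hb
      simp only [Sum.inr.injEq, Sigma.mk.inj_iff, heq_eq_eq, Prod.mk.injEq, true_and]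
      subst hf; rfl
  · intro x
    cases hx : x.1 0 with
    | none =>
      refine ⟨Sum.inl ⟨Fin.tail x.1, ?_⟩, ?_⟩
      · intro i
        have h2 := x.2 i.succ
        rw [Fin.val_succ, pS_eq_cons x.1 ((i:ℕ)+1), hx] at h2
        simp only [jump_none] at h2
        omega
      · apply Subtype.ext
        simp only [vphi]
        rw [← hx, Fin.cons_self_tail]
    | some bj =>
      obtain ⟨b, j⟩ := bj
      have h0 := x.2 0
      rw [Fin.val_zero, Nat.zero_add, pS_one, hx] at h0
      simp only [jump_some] at h0
      refine ⟨Sum.inr ⟨⟨j, by omega⟩, b, ⟨Fin.tail x.1, ?_⟩⟩, ?_⟩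
      · intro i
        have h2 := x.2 i.succ
        rw [Fin.val_succ, pS_eq_cons x.1 ((i:ℕ)+1), hx] at h2
        simp only [jump_some] at h2
        simp only [Fin.val_mk]
        omega
      · apply Subtype.ext
        simp only [vphi]
        rw [← hx, Fin.cons_self_tail]

/-- inverse-direction map for the `W` step -/
def wphi (n : ℕ) : Bool × V n 1 → W (n+1)
  | (b, ⟨f, hf⟩) => ⟨Fin.cons (some (b, 0)) f, by
      intro i
      induction i using Fin.cases with
      | zero => simp [pS_cons_one]
      | succ t =>
        have := hf t
        rw [Fin.val_succ, pS_cons]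
        simp only [jump_some]
        omega⟩

lemma wphi_bij (n : ℕ) : Function.Bijective (wphi n) := by
  constructor
  · rintro ⟨b1, f1, hf1⟩ ⟨b2, f2, hf2⟩ h
    replace h := congrArg Subtype.val h
    simp only [wphi] at h
    have h0 := congrFun h 0
    simp only [Fin.cons_zero, Option.some.injEq, Prod.mk.injEq] at h0
    have hf : f1 = f2 := by
      have := congrArg Fin.tail h; simpa [Fin.tail_cons] using this
    obtain ⟨hb, -⟩ := h0
    subst hb; subst hf
    rfl
  · intro x
    have h0 := x.2 0
    rw [Fin.val_zero, Nat.zero_add, pS_one] at h0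
    have hx : ∃ b, x.1 0 = some (b, 0) := by
      cases hv : x.1 0 with
      | none => rw [hv] at h0; simp at h0
      | some bj =>
        obtain ⟨b, j⟩ := bj
        rw [hv] at h0; simp only [jump_some] at h0
        exact ⟨b, by simp [show j = 0 by omega]⟩
    obtain ⟨b, hb⟩ := hx
    refine ⟨(b, ⟨Fin.tail x.1, ?_⟩), ?_⟩
    · intro i
      have h2 := x.2 i.succ
      rw [Fin.val_succ, pS_eq_cons x.1 ((i:ℕ)+1), hb] at h2
      simp only [jump_some] at h2
      omega
    · apply Subtype.ext
      simp only [wphi]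
      rw [← hb, Fin.cons_self_tail]


variable {n : ℕ}

def pext (p : Fin n → ℕ) (t : ℕ) : ℕ := if h : t < n then p ⟨t, h⟩ else 0

def prevP (p : Fin n → ℕ) : ℕ → ℕ
  | 0 => 0
  | s+1 => pext p s

@[simp] lemma prevP_zero (p : Fin n → ℕ) : prevP p 0 = 0 := rfl
lemma prevP_succ (p : Fin n → ℕ) {s : ℕ} (h : s < n) : prevP p (s+1) = p ⟨s, h⟩ := dif_pos h

/-- forward map: difference/sign encoding of a sorted naive shifted PF -/
def fwdD (p : Fin n → ℕ) (σ : Fin n → ℤ) : Fin n → Γ := fun i =>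
  if p i = prevP p (i:ℕ) then none
  else some (decide (σ ⟨(p i - 1) % n, Nat.mod_lt _ i.pos⟩ = 1), p i - prevP p (i:ℕ) - 1)

lemma jump_fwdD (p : Fin n → ℕ) (σ : Fin n → ℤ) (i : Fin n)
    (hprev : prevP p (i:ℕ) ≤ p i) : jump (fwdD p σ i) = p i - prevP p (i:ℕ) := by
  unfold fwdD
  split
  · rename_i h; simp [h]
  · rename_i h; simp only [jump_some]; omega

lemma fwd_pS (p : Fin n → ℕ) (σ : Fin n → ℤ) (hm : Monotone p)
    (hb : ∀ i : Fin n, 0 < p i ∧ p i ≤ (i:ℕ) + 1) :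
    ∀ t (h : t < n), pS (fwdD p σ) (t+1) = p ⟨t, h⟩ := by
  intro t
  induction t with
  | zero =>
    intro h
    rw [pS_succ, pS_zero, gext_lt _ h, jump_fwdD p σ ⟨0, h⟩ (by simp)]
    have := (hb ⟨0, h⟩).1
    simp only [prevP_zero]
    omega
  | succ s ih =>
    intro h
    have hs : s < n := by omega
    rw [pS_succ, ih hs, gext_lt _ h,
      jump_fwdD p σ ⟨s+1, h⟩ (by rw [prevP_succ p hs]; exact hm (by simp [Fin.le_def]))]
    have hmono : p ⟨s, hs⟩ ≤ p ⟨s+1, h⟩ := hm (by simp [Fin.le_def])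
    rw [prevP_succ p hs]
    omega

def bwdP (d : Fin n → Γ) : Fin n → ℕ := fun i => pS d ((i:ℕ)+1)

def sgnOf : Γ → ℤ
  | none => 0
  | some (b, _) => if b then 1 else -1

lemma prevP_bwdP (d : Fin n → Γ) {t : ℕ} (h : t < n) : prevP (bwdP d) t = pS d t := by
  cases t with
  | zero => simp
  | succ s => rw [prevP_succ _ (by omega : s < n)]; rfl


lemma min_some (d : Fin n → Γ) {k : ℕ} (i : Fin n) (hi : pS d ((i:ℕ)+1) = k+1)
    (hmin : ∀ t, t < (i:ℕ) → pS d (t+1) ≠ k+1) : ∃ b j, d i = some (b, j) := by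
  cases hdi : d i with
  | some bj => obtain ⟨b, j⟩ := bj; exact ⟨b, j, rfl⟩
  | none =>
    exfalso
    have hs : pS d ((i:ℕ)+1) = pS d (i:ℕ) := by
      rw [pS_succ, gext_lt d i.isLt, Fin.eta, hdi, jump_none, Nat.add_zero]
    cases hv : (i:ℕ) with
    | zero => rw [hv] at hs hi; rw [hs] at hi; simp at hi
    | succ s =>
      rw [hv] at hs hi hmin
      exact hmin s (by omega) (by rw [← hs, hi])

instance decEx (d : Fin n → Γ) (K : ℕ) : Decidable (∃ t, t < n ∧ pS d (t+1) = K) :=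
  decidable_of_iff (∃ t ∈ Finset.range n, pS d (t+1) = K) (by simp)

noncomputable def bwdS (d : Fin n → Γ) (k : Fin n) : ℤ :=
  if h : ∃ t, t < n ∧ pS d (t+1) = (k:ℕ)+1 then sgnOf (gext d (Nat.find h)) else 0

lemma bwdS_spec (d : Fin n → Γ) (k : Fin n) (i : Fin n) (hi : pS d ((i:ℕ)+1) = (k:ℕ)+1)
    (hmin : ∀ t, t < (i:ℕ) → pS d (t+1) ≠ (k:ℕ)+1) : bwdS d k = sgnOf (d i) := by
  have hex : ∃ t, t < n ∧ pS d (t+1) = (k:ℕ)+1 := ⟨(i:ℕ), i.isLt, hi⟩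
  rw [bwdS, dif_pos hex]
  have hfi : Nat.find hex = (i:ℕ) := le_antisymm (Nat.find_le ⟨i.isLt, hi⟩)
    (by by_contra h; push_neg at h; exact hmin _ h (Nat.find_spec hex).2)
  rw [hfi, gext_lt d i.isLt, Fin.eta]

lemma bwdS_neg (d : Fin n → Γ) (k : Fin n) (h : ∀ t, t < n → pS d (t+1) ≠ (k:ℕ)+1) :
    bwdS d k = 0 := by
  rw [bwdS, dif_neg]
  rintro ⟨t, htn, hte⟩
  exact h t htn hte

lemma bwd_mem (d : Fin n → Γ)
    (hd : ∀ i : Fin n, 1 ≤ pS d ((i:ℕ)+1) ∧ pS d ((i:ℕ)+1) ≤ (i:ℕ) + 1) :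
    IsSortedNaiveShiftedPF n (bwdP d) (bwdS d) := by
  refine ⟨?_, ?_, ?_⟩
  · intro i j hij
    exact pS_mono d (by have := Fin.le_def.mp hij; omega)
  · intro i; exact ⟨(hd i).1, (hd i).2⟩
  · intro k
    by_cases hex : ∃ t, t < n ∧ pS d (t+1) = (k:ℕ)+1
    · have hP : ∀ t, (fun t => t < n ∧ pS d (t+1) = (k:ℕ)+1) t ↔
          (t < n ∧ pS d (t+1) = (k:ℕ)+1) := fun t => Iff.rfl
      set t₀ := Nat.find hex with ht₀
      obtain ⟨ht₀n, ht₀e⟩ := Nat.find_spec hex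
      have hmin : ∀ t, t < t₀ → pS d (t+1) ≠ (k:ℕ)+1 := by
        intro t ht hte
        exact Nat.find_min hex ht ⟨by omega, hte⟩
      have hspec := bwdS_spec d k ⟨t₀, ht₀n⟩ ht₀e hmin
      obtain ⟨b, j, hbj⟩ := min_some d ⟨t₀, ht₀n⟩ ht₀e hmin
      rw [hspec, hbj]
      constructor
      · cases b <;> simp [sgnOf]
      · constructor
        · intro h0; exfalso; cases b <;> simp [sgnOf] at h0
        · intro hall
          exfalso
          exact hall ⟨t₀, ht₀n⟩ ht₀e
    · push_neg at hex
      have h0 : bwdS d k = 0 := bwdS_neg d k hex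
      rw [h0]
      refine ⟨Or.inr (Or.inl rfl), ?_⟩
      constructor
      · intro _ j hj
        exact hex (j:ℕ) j.isLt hj
      · intro _; rfl

lemma fwd_mem (p : Fin n → ℕ) (σ : Fin n → ℤ) (h : IsSortedNaiveShiftedPF n p σ) :
    ∀ i : Fin n, 1 ≤ pS (fwdD p σ) ((i:ℕ)+1) ∧ pS (fwdD p σ) ((i:ℕ)+1) ≤ (i:ℕ) + 1 := by
  obtain ⟨hm, hb, -⟩ := h
  intro i
  rw [fwd_pS p σ hm hb (i:ℕ) i.isLt, Fin.eta]
  exact ⟨(hb i).1, (hb i).2⟩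

lemma left_ne_prev (p : Fin n → ℕ) (σ : Fin n → ℤ)
    (hps : ∀ t (ht : t < n), pS (fwdD p σ) (t+1) = p ⟨t, ht⟩)
    {t₀ K : ℕ} (ht₀n : t₀ < n) (hp₀ : p ⟨t₀, ht₀n⟩ = K + 1)
    (hmin : ∀ t, t < t₀ → pS (fwdD p σ) (t+1) ≠ K + 1) :
    ¬ p ⟨t₀, ht₀n⟩ = prevP p t₀ := by
  cases t₀ with
  | zero => rw [prevP_zero, hp₀]; simp
  | succ s =>
    have hsn : s < n := by omega
    rw [prevP_succ p hsn]
    intro heq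
    exact hmin s (by omega) (by rw [hps s hsn, ← heq, hp₀])

noncomputable def mainEquiv (n : ℕ) :
    {pσ : (Fin n → ℕ) × (Fin n → ℤ) // IsSortedNaiveShiftedPF n pσ.1 pσ.2} ≃ W n where
  toFun x := ⟨fwdD x.1.1 x.1.2, fwd_mem x.1.1 x.1.2 x.2⟩
  invFun y := ⟨(bwdP y.1, bwdS y.1), bwd_mem y.1 y.2⟩
  left_inv x := by
    obtain ⟨⟨p, σ⟩, hx⟩ := x
    obtain ⟨hm, hb, hσ⟩ := hx
    dsimp only at hm hb hσ
    apply Subtype.ext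
    dsimp only
    have hps : ∀ t (ht : t < n), pS (fwdD p σ) (t+1) = p ⟨t, ht⟩ := fwd_pS p σ hm hb
    have hpp : bwdP (fwdD p σ) = p := by
      funext i
      show pS (fwdD p σ) ((i:ℕ)+1) = p i
      rw [hps (i:ℕ) i.isLt, Fin.eta]
    refine Prod.ext hpp ?_
    funext k
    show bwdS (fwdD p σ) k = σ k
    by_cases hu : ∃ j : Fin n, p j = (k:ℕ)+1
    · obtain ⟨j0, hj0⟩ := hu
      have hQ : ∃ t, t < n ∧ pS (fwdD p σ) (t+1) = (k:ℕ)+1 :=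
        ⟨(j0:ℕ), j0.isLt, by rw [hps (j0:ℕ) j0.isLt, Fin.eta]; exact hj0⟩
      obtain ⟨ht₀n, ht₀e⟩ := Nat.find_spec hQ
      have hmin : ∀ t, t < Nat.find hQ → pS (fwdD p σ) (t+1) ≠ (k:ℕ)+1 := by
        intro t ht hte
        exact Nat.find_min hQ ht ⟨by omega, hte⟩
      have hp₀ : p ⟨Nat.find hQ, ht₀n⟩ = (k:ℕ)+1 := by
        rw [← hps (Nat.find hQ) ht₀n]; exact ht₀e
      rw [bwdS_spec (fwdD p σ) k ⟨Nat.find hQ, ht₀n⟩ ht₀e hmin]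
      have hne := left_ne_prev p σ hps ht₀n hp₀ hmin
      have hσk : σ k ≠ 0 := by
        intro h0
        exact ((hσ k).2.mp h0) ⟨Nat.find hQ, ht₀n⟩ hp₀
      have hidx : (⟨(p ⟨Nat.find hQ, ht₀n⟩ - 1) % n,
          Nat.mod_lt _ (Fin.pos ⟨Nat.find hQ, ht₀n⟩)⟩ : Fin n) = k := by
        apply Fin.ext
        simp only [hp₀, Nat.add_sub_cancel]
        exact Nat.mod_eq_of_lt k.isLt
      show sgnOf (fwdD p σ ⟨Nat.find hQ, ht₀n⟩) = σ k
      show sgnOf (if p ⟨Nat.find hQ, ht₀n⟩ = prevP p (Nat.find hQ) then none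
        else some (decide (σ ⟨(p ⟨Nat.find hQ, ht₀n⟩ - 1) % n,
          Nat.mod_lt _ (Fin.pos ⟨Nat.find hQ, ht₀n⟩)⟩ = 1),
          p ⟨Nat.find hQ, ht₀n⟩ - prevP p (Nat.find hQ) - 1)) = σ k
      rw [if_neg hne, hidx]
      rcases (hσ k).1 with h1 | h1 | h1
      · rw [h1]; simp [sgnOf]
      · exact absurd h1 hσk
      · rw [h1]; simp [sgnOf]
    · push_neg at hu
      have hAll : ∀ t, t < n → pS (fwdD p σ) (t+1) ≠ (k:ℕ)+1 := by
        intro t ht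
        rw [hps t ht]
        exact hu ⟨t, ht⟩
      rw [bwdS_neg (fwdD p σ) k hAll]
      exact ((hσ k).2.mpr (fun j => hu j)).symm
  right_inv y := by
    obtain ⟨d, hd⟩ := y
    apply Subtype.ext
    dsimp only
    funext i
    have hstep : pS d ((i:ℕ)+1) = pS d (i:ℕ) + jump (d i) := by
      rw [pS_succ, gext_lt d i.isLt, Fin.eta]
    have hprev : prevP (bwdP d) (i:ℕ) = pS d (i:ℕ) := prevP_bwdP d i.isLt
    have hbp : bwdP d i = pS d ((i:ℕ)+1) := rfl
    cases hdi : d i with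
    | none =>
      rw [hdi, jump_none] at hstep
      unfold fwdD
      rw [if_pos (by rw [hbp, hprev]; omega)]
    | some bj =>
      obtain ⟨b, j⟩ := bj
      rw [hdi, jump_some] at hstep
      have hne : ¬ bwdP d i = prevP (bwdP d) (i:ℕ) := by rw [hbp, hprev]; omega
      unfold fwdD
      rw [if_neg hne]
      have h1 : 1 ≤ pS d ((i:ℕ)+1) := (hd i).1
      have hKn : bwdP d i - 1 < n := by
        have h2 := (hd i).2
        have := i.isLt
        rw [hbp]; omega
      have hjj : bwdP d i - prevP (bwdP d) (i:ℕ) - 1 = j := by rw [hbp, hprev]; omega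
      have hidx : (⟨(bwdP d i - 1) % n, Nat.mod_lt _ (Fin.pos i)⟩ : Fin n)
          = ⟨bwdP d i - 1, hKn⟩ := Fin.ext (Nat.mod_eq_of_lt hKn)
      have hkv : ((⟨bwdP d i - 1, hKn⟩ : Fin n) : ℕ) + 1 = pS d ((i:ℕ)+1) := by
        show bwdP d i - 1 + 1 = pS d ((i:ℕ)+1)
        rw [hbp]; omega
      have hmin : ∀ t, t < (i:ℕ) → pS d (t+1) ≠ ((⟨bwdP d i - 1, hKn⟩ : Fin n) : ℕ)+1 := by
        intro t ht hte
        have hmono : pS d (t+1) ≤ pS d (i:ℕ) := pS_mono d (by omega)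
        rw [hkv] at hte
        omega
      have hbs : bwdS d ⟨bwdP d i - 1, hKn⟩ = if b then 1 else -1 := by
        rw [bwdS_spec d ⟨bwdP d i - 1, hKn⟩ i (by rw [hkv]) hmin, hdi]
        simp [sgnOf]
      rw [hidx, hbs, hjj]
      cases b <;> simp


lemma finiteV : ∀ m, ∀ a, Finite (V m a) := by
  intro m
  induction m with
  | zero => intro a; infer_instance
  | succ m ih =>
    intro a
    have hfin : ∀ b, Finite (V m b) := ih
    haveI : ∀ j : Fin a, Finite (Bool × V m (a - (j:ℕ))) := fun j => by
      haveI := hfin (a - (j:ℕ)); infer_instance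
    haveI : Finite ((V m (a+1)) ⊕ (Σ j : Fin a, Bool × V m (a - (j:ℕ)))) := by
      haveI := hfin (a+1); infer_instance
    exact Finite.of_surjective _ (vphi_bij m a).2

lemma cardV : ∀ m, ∀ a, Nat.card (V m a) = G m a := by
  intro m
  induction m with
  | zero => intro a; exact Nat.card_unique
  | succ m ih =>
    intro a
    haveI : ∀ b, Finite (V m b) := finiteV m
    haveI : ∀ j : Fin a, Finite (Bool × V m (a - (j:ℕ))) := fun j => by infer_instance
    have e := Nat.card_congr (Equiv.ofBijective _ (vphi_bij m a))
    rw [← e, Nat.card_sum]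
    haveI : ∀ j : Fin a, Fintype (Bool × V m (a - (j:ℕ))) := fun j => Fintype.ofFinite _
    have hsig : Nat.card (Σ j : Fin a, Bool × V m (a - (j:ℕ)))
        = ∑ j : Fin a, 2 * G m (a - (j:ℕ)) := by
      rw [Nat.card_eq_fintype_card, Fintype.card_sigma]
      apply Finset.sum_congr rfl
      intro j _
      rw [← Nat.card_eq_fintype_card, Nat.card_prod, ih (a - (j:ℕ))]
      simp [Nat.card_eq_fintype_card]
    rw [hsig, ih (a+1)]
    rw [Fin.sum_univ_eq_sum_range (fun j => 2 * G m (a - j)) a, ← Finset.mul_sum]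
    rfl

lemma cardW : ∀ n, Nat.card (W n) = schroeder n := by
  intro n
  cases n with
  | zero => rw [Nat.card_unique]; rw [schroeder]
  | succ n =>
    have e := Nat.card_congr (Equiv.ofBijective _ (wphi_bij n))
    rw [← e, Nat.card_prod, cardV n 1, (G_key n).2]
    have : Nat.card Bool = 2 := by simp [Nat.card_eq_fintype_card]
    rw [this]


end SNSPF

/-- The number of sorted naive shifted parking functions of size `n` is the
`n`-th large Schröder number. -/
theorem card_sortedNaiveShiftedPF (n : ℕ) :
    Nat.card {pσ : (Fin n → ℕ) × (Fin n → ℤ) //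
        IsSortedNaiveShiftedPF n pσ.1 pσ.2} = schroeder n := by
  rw [Nat.card_congr (SNSPF.mainEquiv n), SNSPF.cardW n]
end

section
/- The Kreweras numbers sum to the Catalan number: for every n ≥ 1, ∑_{μ ⊢ n} (1/(n-ℓ(μ)+1)) · n!/(m_1(μ)! ⋯ m_n(μ)! (n-ℓ(μ))!) = C_n = (1/(n+1)) binom(2n,n), where the sum is over all partitions μ of n. -/
open Finset

section AuxPartition

lemma parts_mem_Icc {n : ℕ} (μ : n.Partition) {i : ℕ} (hi : i ∈ μ.parts) :
    i ∈ Icc 1 n := by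
  rw [mem_Icc]
  refine ⟨μ.parts_pos hi, ?_⟩
  rw [← μ.parts_sum]
  exact Multiset.single_le_sum (fun x _ => Nat.zero_le x) _ hi

lemma parts_card_le {n : ℕ} (μ : n.Partition) : μ.parts.card ≤ n := by
  have := Multiset.card_nsmul_le_sum (fun x hx => μ.parts_pos hx :
    ∀ x ∈ μ.parts, 1 ≤ x)
  simpa [μ.parts_sum] using this

lemma sum_count_parts {n : ℕ} (μ : n.Partition) :
    ∑ i ∈ Icc 1 n, μ.parts.count i = μ.parts.card :=
  Multiset.sum_count_eq_card (fun _ ha => parts_mem_Icc μ ha)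

lemma sum_mul_count_parts {n : ℕ} (μ : n.Partition) :
    ∑ i ∈ Icc 1 n, i * μ.parts.count i = n := by
  have h : (μ.parts.map id).sum = ∑ a ∈ μ.parts.toFinset, μ.parts.count a • id a :=
    Finset.sum_multiset_map_count μ.parts id
  rw [Multiset.map_id, μ.parts_sum] at h
  have h2 : ∑ a ∈ μ.parts.toFinset, μ.parts.count a • id a
      = ∑ i ∈ Icc 1 n, i * μ.parts.count i := by
    refine (Finset.sum_subset (fun i hi => parts_mem_Icc μ (Multiset.mem_toFinset.mp hi))
      (fun i _ hi => ?_)).trans ?_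
    · have : μ.parts.count i = 0 := by
        simpa [Multiset.count_eq_zero] using fun h => hi (Multiset.mem_toFinset.mpr h)
      simp [this]
    · exact Finset.sum_congr rfl fun i _ => by simp [mul_comm]
  conv_rhs => rw [h, h2]

lemma range_succ_eq_insert (n : ℕ) : range (n+1) = insert 0 (Icc 1 n) := by
  ext i; simp [Nat.lt_succ_iff]; omega

end AuxPartition

section StepB

open PowerSeries in
/-- The filtered multinomial sum equals the central binomial coefficient. -/
lemma sum_multinomial_filter_eq_centralBinom (n : ℕ) :
    ∑ k ∈ (piAntidiag (range (n+1)) (n+1)).filter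
        (fun k => ∑ i ∈ range (n+1), i * k i = n),
      (Nat.multinomial (range (n+1)) k : ℚ) = Nat.centralBinom n := by
  set P : PowerSeries ℚ := ∑ i ∈ range (n+1), X ^ i with hPdef
  have hP : P * (1 - X) = 1 - X ^ (n+1) := by
    have h := geom_sum_mul (X : PowerSeries ℚ) (n+1)
    linear_combination -h
  have key : P ^ (n+1) = (1 - X ^ (n+1)) ^ (n+1) * (invOneSubPow ℚ (n+1)).val := by
    have h1 : ((1 - X : PowerSeries ℚ) ^ (n+1)) * (invOneSubPow ℚ (n+1)).val = 1 := by
      rw [← invOneSubPow_inv_eq_one_sub_pow]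
      exact (invOneSubPow ℚ (n+1)).inv_val
    calc P ^ (n+1) = P ^ (n+1) * (((1 - X) ^ (n+1)) * (invOneSubPow ℚ (n+1)).val) := by
          rw [h1, mul_one]
      _ = (P * (1 - X)) ^ (n+1) * (invOneSubPow ℚ (n+1)).val := by
          rw [mul_pow]; ring
      _ = (1 - X ^ (n+1)) ^ (n+1) * (invOneSubPow ℚ (n+1)).val := by rw [hP]
  have hL : (coeff (R := ℚ) n) (P ^ (n+1)) =
      ∑ k ∈ (piAntidiag (range (n+1)) (n+1)).filter
        (fun k => ∑ i ∈ range (n+1), i * k i = n),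
      (Nat.multinomial (range (n+1)) k : ℚ) := by
    rw [hPdef, sum_pow_eq_sum_piAntidiag, map_sum, sum_filter]
    refine sum_congr rfl fun k hk => ?_
    have h2 : ∏ i ∈ range (n+1), ((X : PowerSeries ℚ) ^ i) ^ k i
        = X ^ (∑ i ∈ range (n+1), i * k i) := by
      rw [← prod_pow_eq_pow_sum]
      exact prod_congr rfl fun i _ => by rw [← pow_mul]
    rw [h2]
    have h3 : ((Nat.multinomial (range (n+1)) k : ℚ⟦X⟧)) =
        PowerSeries.C ((Nat.multinomial (range (n+1)) k : ℚ)) := by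
      rfl
    rw [h3, coeff_C_mul, coeff_X_pow]
    by_cases h : ∑ i ∈ range (n+1), i * k i = n
    · simp [h]
    · simp [h, Ne.symm h]
  have hR : (coeff (R := ℚ) n) ((1 - X ^ (n+1)) ^ (n+1) * (invOneSubPow ℚ (n+1)).val)
      = Nat.centralBinom n := by
    obtain ⟨C, hC⟩ : (X : PowerSeries ℚ) ^ (n+1) ∣ 1 - (1 - X ^ (n+1)) ^ (n+1) := by
      have := one_sub_dvd_one_sub_pow (1 - (X : PowerSeries ℚ) ^ (n+1)) (n+1)
      rwa [sub_sub_cancel] at this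
    have hA : (1 - (X : PowerSeries ℚ) ^ (n+1)) ^ (n+1)
        = 1 - X ^ (n+1) * C := by rw [← hC]; ring
    rw [hA, sub_mul, one_mul, map_sub, invOneSubPow_val_succ_eq_mk_add_choose, coeff_mk,
      mul_assoc, coeff_X_pow_mul']
    simp only [if_neg (by omega : ¬ (n + 1 ≤ n)), sub_zero]
    rw [Nat.centralBinom, two_mul]
  rw [← hL, key, hR]

end StepB

section StepA

/-- Reindexing the sum over partitions of `n` as a sum over count vectors. -/
lemma sum_multinomial_partition_eq (n : ℕ) :
    ∑ μ : n.Partition, (Nat.multinomial (range (n+1))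
        (fun j => if j = 0 then n + 1 - μ.parts.card else μ.parts.count j) : ℚ)
      = ∑ k ∈ (piAntidiag (range (n+1)) (n+1)).filter
        (fun k => ∑ i ∈ range (n+1), i * k i = n),
      (Nat.multinomial (range (n+1)) k : ℚ) := by
  have h0 : (0:ℕ) ∉ Icc 1 n := by simp
  refine Finset.sum_bij
    (fun μ _ => fun j => if j = 0 then n + 1 - μ.parts.card else μ.parts.count j)
    (fun μ _ => ?_) (fun μ _ ν _ h => ?_) (fun k hk => ?_) (fun μ _ => rfl)
  · -- maps into the filtered set
    rw [mem_filter, mem_piAntidiag]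
    refine ⟨⟨?_, ?_⟩, ?_⟩
    · rw [range_succ_eq_insert, Finset.sum_insert h0]
      have h1 : ∑ i ∈ Icc 1 n, (if i = 0 then n + 1 - μ.parts.card else μ.parts.count i)
          = μ.parts.card := by
        rw [← sum_count_parts μ]
        exact Finset.sum_congr rfl fun i hi => if_neg (by rintro rfl; exact h0 hi)
      rw [if_pos rfl, h1]
      have := parts_card_le μ
      omega
    · intro i hi
      by_cases h : i = 0
      · subst h; simp [range_succ_eq_insert]
      · replace hi : (if i = 0 then n + 1 - μ.parts.card else μ.parts.count i) ≠ 0 := hi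
        rw [if_neg h] at hi
        have := parts_mem_Icc μ (Multiset.count_pos.mp (Nat.pos_of_ne_zero hi))
        rw [range_succ_eq_insert]
        exact Finset.mem_insert_of_mem this
    · rw [range_succ_eq_insert, Finset.sum_insert h0]
      have h2 : ∑ i ∈ Icc 1 n, i * (if i = 0 then n + 1 - μ.parts.card else μ.parts.count i)
          = ∑ i ∈ Icc 1 n, i * μ.parts.count i :=
        Finset.sum_congr rfl fun i hi => by rw [if_neg (by rintro rfl; exact h0 hi)]
      rw [zero_mul, zero_add, h2, sum_mul_count_parts]
  · -- injectivity
    ext1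
    ext j
    by_cases hj : j ∈ Icc 1 n
    · have hj0 : j ≠ 0 := by rintro rfl; exact h0 hj
      have := congrFun h j
      simpa [hj0] using this
    · rw [Multiset.count_eq_zero_of_notMem, Multiset.count_eq_zero_of_notMem]
      · exact fun hcon => hj (parts_mem_Icc ν hcon)
      · exact fun hcon => hj (parts_mem_Icc μ hcon)
  · -- surjectivity
    rw [mem_filter, mem_piAntidiag] at hk
    obtain ⟨⟨hsum, hsupp⟩, hw⟩ := hk
    have hcount : ∀ j, Multiset.count j (∑ i ∈ Icc 1 n, Multiset.replicate (k i) i)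
        = if j ∈ Icc 1 n then k j else 0 := by
      intro j
      rw [Multiset.count_sum']
      by_cases hj : j ∈ Icc 1 n
      · rw [if_pos hj, Finset.sum_eq_single_of_mem j hj
          (fun i _ hij => by rw [Multiset.count_replicate, if_neg hij]),
          Multiset.count_replicate, if_pos rfl]
      · rw [if_neg hj]
        refine Finset.sum_eq_zero fun i hi => ?_
        rw [Multiset.count_replicate, if_neg (by rintro rfl; exact hj hi)]
    have hIccsum : ∑ i ∈ Icc 1 n, i * k i = n := by
      rw [range_succ_eq_insert, Finset.sum_insert h0] at hw
      simpa using hw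
    have hsum' : k 0 + ∑ i ∈ Icc 1 n, k i = n + 1 := by
      rw [range_succ_eq_insert, Finset.sum_insert h0] at hsum
      exact hsum
    refine ⟨⟨∑ i ∈ Icc 1 n, Multiset.replicate (k i) i, fun {j} hj => ?_, ?_⟩, mem_univ _, ?_⟩
    · obtain ⟨i, hi, hji⟩ := Multiset.mem_sum.mp hj
      have h1 := (mem_Icc.mp hi).1
      have := Multiset.eq_of_mem_replicate hji
      omega
    · have h3 : (∑ i ∈ Icc 1 n, Multiset.replicate (k i) i).sum
          = ∑ i ∈ Icc 1 n, (Multiset.replicate (k i) i).sum :=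
        map_sum Multiset.sumAddMonoidHom _ _
      have h4 : ∑ i ∈ Icc 1 n, (Multiset.replicate (k i) i).sum
          = ∑ i ∈ Icc 1 n, i * k i :=
        Finset.sum_congr rfl fun i _ => by
          rw [Multiset.sum_replicate, smul_eq_mul, mul_comm]
      rw [h3, h4]
      exact hIccsum
    · funext j
      simp only
      by_cases hj0 : j = 0
      · subst hj0
        rw [if_pos rfl]
        have hcard : Multiset.card (∑ i ∈ Icc 1 n, Multiset.replicate (k i) i)
            = ∑ i ∈ Icc 1 n, k i := by
          rw [← Multiset.cardHom_apply, map_sum]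
          exact Finset.sum_congr rfl fun i _ => Multiset.card_replicate _ _
        rw [hcard]
        omega
      · rw [if_neg hj0, hcount j]
        by_cases hj : j ∈ Icc 1 n
        · rw [if_pos hj]
        · rw [if_neg hj]
          by_contra hne
          have := hsupp j (Ne.symm hne)
          rw [range_succ_eq_insert, Finset.mem_insert] at this
          rcases this with h | h
          · exact hj0 h
          · exact hj h

end StepA

/-- The Kreweras number is a multinomial coefficient divided by `n + 1`. -/
lemma krew_eq_multinomial_div (n : ℕ) (μ : n.Partition) :
    krew n μ = (Nat.multinomial (range (n+1))
      (fun j => if j = 0 then n + 1 - μ.parts.card else μ.parts.count j) : ℚ) / (n+1) := by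
  have hℓ := parts_card_le μ
  set ℓ := μ.parts.card with hℓdef
  have h0 : (0:ℕ) ∉ Icc 1 n := by simp
  have hprod : ∏ i ∈ range (n+1),
        (Nat.factorial (if i = 0 then n + 1 - ℓ else μ.parts.count i))
      = (n + 1 - ℓ).factorial * ∏ i ∈ Icc 1 n, (μ.parts.count i).factorial := by
    rw [range_succ_eq_insert, Finset.prod_insert h0, if_pos rfl]
    congr 1
    exact Finset.prod_congr rfl fun i hi => by rw [if_neg (by rintro rfl; exact h0 hi)]
  have hksum : ∑ i ∈ range (n+1), (if i = 0 then n + 1 - ℓ else μ.parts.count i)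
      = n + 1 := by
    rw [range_succ_eq_insert, Finset.sum_insert h0, if_pos rfl]
    have h1 : ∑ i ∈ Icc 1 n, (if i = 0 then n + 1 - ℓ else μ.parts.count i) = ℓ := by
      rw [hℓdef, ← sum_count_parts μ]
      exact Finset.sum_congr rfl fun i hi => if_neg (by rintro rfl; exact h0 hi)
    rw [h1]; omega
  have hspec := Nat.multinomial_spec (range (n+1))
    (fun j => if j = 0 then n + 1 - ℓ else μ.parts.count j)
  rw [hksum, hprod] at hspec
  set M := Nat.multinomial (range (n+1))
    (fun j => if j = 0 then n + 1 - ℓ else μ.parts.count j) with hM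
  have hQ : (((n + 1 - ℓ).factorial : ℚ) *
        ∏ i ∈ Icc 1 n, ((μ.parts.count i).factorial : ℚ)) * (M : ℚ)
      = ((n+1).factorial : ℚ) := by exact_mod_cast congrArg (Nat.cast (R := ℚ)) hspec
  have hfac : (n + 1 - ℓ).factorial = (n + 1 - ℓ) * (n - ℓ).factorial := by
    have : n + 1 - ℓ = (n - ℓ) + 1 := by omega
    rw [this, Nat.factorial_succ]
  rw [hfac] at hQ
  push_cast at hQ
  rw [Nat.cast_sub (by omega : ℓ ≤ n + 1)] at hQ
  push_cast at hQ
  have ha : (∏ i ∈ Icc 1 n, ((μ.parts.count i).factorial : ℚ)) ≠ 0 :=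
    Finset.prod_ne_zero_iff.mpr fun i _ =>
      Nat.cast_ne_zero.mpr (Nat.factorial_ne_zero _)
  have hc : ((n - ℓ).factorial : ℚ) ≠ 0 := Nat.cast_ne_zero.mpr (Nat.factorial_ne_zero _)
  have he : ((n : ℚ) - ℓ + 1) ≠ 0 := by
    have : (ℓ : ℚ) ≤ n := by exact_mod_cast hℓ
    nlinarith
  have hn1 : ((n : ℚ) + 1) ≠ 0 := by positivity
  rw [krew]
  rw [← hℓdef]
  have hfacn : ((n+1).factorial : ℚ) = ((n:ℚ)+1) * (n.factorial : ℚ) := by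
    rw [Nat.factorial_succ]; push_cast; ring
  rw [hfacn] at hQ
  field_simp
  linear_combination -hQ

/-- The Kreweras numbers of the partitions of `n` sum to the Catalan number
`C_n = (1/(n+1)) binom(2n, n)`. -/
theorem sum_krew_eq_catalan (n : ℕ) (hn : 1 ≤ n) :
    ∑ μ : n.Partition, krew n μ = (catalan n : ℚ) := by
  have hn1 : ((n : ℚ) + 1) ≠ 0 := by positivity
  calc ∑ μ : n.Partition, krew n μ
      = ∑ μ : n.Partition, (Nat.multinomial (range (n+1))
          (fun j => if j = 0 then n + 1 - μ.parts.card else μ.parts.count j) : ℚ)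
            / (n+1) := Finset.sum_congr rfl fun μ _ => krew_eq_multinomial_div n μ
    _ = (∑ μ : n.Partition, (Nat.multinomial (range (n+1))
          (fun j => if j = 0 then n + 1 - μ.parts.card else μ.parts.count j) : ℚ))
            / (n+1) := by rw [Finset.sum_div]
    _ = (Nat.centralBinom n : ℚ) / (n+1) := by
          rw [sum_multinomial_partition_eq, sum_multinomial_filter_eq_centralBinom]
    _ = (catalan n : ℚ) := by
          rw [div_eq_iff hn1]
          have := succ_mul_catalan_eq_centralBinom n
          have h2 : ((n + 1) * catalan n : ℕ) = (Nat.centralBinom n : ℕ) := this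
          exact_mod_cast (by push_cast [← h2]; ring : (Nat.centralBinom n : ℚ)
            = (catalan n : ℚ) * ((n:ℚ)+1))
end
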